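/- Consider a network of m RFMIOs with feedback inputs u^i = c^i_0 + Σ_{k=1}^m c^i_k y^k, where c^i_0 > 0 and c^i_k ≥ 0. Then there exists a point e ∈ (0,1)^ℓ with F(e) = 0 such that e is globally asymptotically stable on the cube: every differentiable function z : [0,∞) → ℝ^ℓ satisfying ż(t) = F(z(t)) for all t ≥ 0 and z(0) ∈ [0,1]^ℓ satisfies lim_{t→∞} z(t) = e. -/

import Mathlib

open scoped BigOperators

/-- Extended occupancy vector of an RFM chain with `N + 1` sites:
the input value `u` at the left boundary, the state in the middle,
and `0` at the right boundary. -/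
noncomputable def rfmExt {N : ℕ} (u : ℝ) (x : Fin (N + 1) → ℝ) : Fin (N + 3) → ℝ :=
  Fin.cons u (Fin.snoc x 0)

/-- The flow into site `j` (so `j = 0` is the entry flow `λ₀ u (1 - x₁)`,
`j` internal is `λ_j x_j (1 - x_{j+1})` in 1-based notation,
and `j = N + 1` is the exit flow `λ_n x_n`). -/
noncomputable def rfmFlow {N : ℕ} (lam : Fin (N + 2) → ℝ) (u : ℝ)
    (x : Fin (N + 1) → ℝ) (j : Fin (N + 2)) : ℝ :=
  lam j * rfmExt u x j.castSucc * (1 - rfmExt u x j.succ)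

/-- The vector field of a single RFMIO chain with input `u`. -/
noncomputable def rfmVF {N : ℕ} (lam : Fin (N + 2) → ℝ) (u : ℝ)
    (x : Fin (N + 1) → ℝ) (j : Fin (N + 1)) : ℝ :=
  rfmFlow lam u x j.castSucc - rfmFlow lam u x j.succ

/-- The steady-state equations of an RFM chain with input `u`: all flows are equal,
i.e. `λ₀ u (1-e₁) = λ₁ e₁ (1-e₂) = ⋯ = λ_n e_n`. -/
def rfmSS {N : ℕ} (lam : Fin (N + 2) → ℝ) (u : ℝ) (e : Fin (N + 1) → ℝ) : Prop :=
  ∀ j : Fin (N + 1), rfmFlow lam u e j.castSucc = rfmFlow lam u e j.succ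

/-- The input to RFMIO `i` in the network: `u^i = c^i_0 + ∑_k c^i_k y^k`,
where `y^k = λ^k_{n^k} x^k_{n^k}` is the output of RFMIO `k`. -/
noncomputable def netInput {m : ℕ} {n : Fin m → ℕ}
    (lam : ∀ i : Fin m, Fin (n i + 2) → ℝ)
    (c0 : Fin m → ℝ) (c : Fin m → Fin m → ℝ)
    (z : ∀ i : Fin m, Fin (n i + 1) → ℝ) (i : Fin m) : ℝ :=
  c0 i + ∑ k : Fin m, c i k * (lam k (Fin.last (n k + 1)) * z k (Fin.last (n k)))

/-- The vector field of the network of `m` RFMIOs with feedback connections. -/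
noncomputable def netVF {m : ℕ} {n : Fin m → ℕ}
    (lam : ∀ i : Fin m, Fin (n i + 2) → ℝ)
    (c0 : Fin m → ℝ) (c : Fin m → Fin m → ℝ)
    (z : ∀ i : Fin m, Fin (n i + 1) → ℝ) : ∀ i : Fin m, Fin (n i + 1) → ℝ :=
  fun i => rfmVF (lam i) (netInput lam c0 c z i) (z i)

/-- The network equilibrium equations. -/
def netSS {m : ℕ} {n : Fin m → ℕ}
    (lam : ∀ i : Fin m, Fin (n i + 2) → ℝ)
    (c0 : Fin m → ℝ) (c : Fin m → Fin m → ℝ)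
    (e : ∀ i : Fin m, Fin (n i + 1) → ℝ) : Prop :=
  ∀ i : Fin m, rfmSS (lam i) (netInput lam c0 c e i) (e i)

namespace RFMNet
open Set Filter

abbrev St (m : ℕ) (n : Fin m → ℕ) : Type := ∀ i : Fin m, Fin (n i + 1) → ℝ

/-! ### rfmExt index lemmas -/

lemma rfmExt_zero {N : ℕ} (u : ℝ) (x : Fin (N + 1) → ℝ) : rfmExt u x 0 = u := by
  simp [rfmExt]

lemma rfmExt_mid {N : ℕ} (u : ℝ) (x : Fin (N + 1) → ℝ) (j : Fin (N + 1)) :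
    rfmExt u x j.castSucc.succ = x j := by
  simp [rfmExt]

lemma rfmExt_last {N : ℕ} (u : ℝ) (x : Fin (N + 1) → ℝ) :
    rfmExt u x (Fin.last (N + 2)) = 0 := by
  have h : (Fin.last (N + 2)) = (Fin.last (N + 1)).succ := (Fin.succ_last _).symm
  rw [h]; unfold rfmExt; rw [Fin.cons_succ, Fin.snoc_last]

lemma rfmExt_cases {N : ℕ} (u v : ℝ) (x y : Fin (N + 1) → ℝ) (k : Fin (N + 3)) :
    (rfmExt u x k = u ∧ rfmExt v y k = v) ∨
    (rfmExt u x k = 0 ∧ rfmExt v y k = 0) ∨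
    ∃ j, rfmExt u x k = x j ∧ rfmExt v y k = y j := by
  induction k using Fin.cases with
  | zero => exact Or.inl ⟨rfmExt_zero u x, rfmExt_zero v y⟩
  | succ q =>
    induction q using Fin.lastCases with
    | last =>
      refine Or.inr (Or.inl ⟨?_, ?_⟩) <;>
      · unfold rfmExt; rw [Fin.cons_succ, Fin.snoc_last]
    | cast p =>
      refine Or.inr (Or.inr ⟨p, ?_, ?_⟩) <;> · rw [Fin.succ_castSucc]; exact rfmExt_mid _ _ _

lemma rfmExt_mid' {N : ℕ} (u : ℝ) (x : Fin (N + 1) → ℝ) (j : Fin N) :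
    rfmExt u x j.castSucc.succ.succ = x j.succ := by
  rw [Fin.succ_castSucc]; exact rfmExt_mid u x j.succ

lemma rfmExt_succ_cases {N : ℕ} (u : ℝ) (x : Fin (N + 1) → ℝ) (k : Fin (N + 2)) :
    rfmExt u x k.succ = 0 ∨ ∃ j, rfmExt u x k.succ = x j := by
  induction k using Fin.lastCases with
  | last => left; rw [Fin.succ_last]; exact rfmExt_last u x
  | cast p => right; exact ⟨p, by rw [Fin.succ_castSucc]; exact rfmExt_mid _ _ _⟩

/-! ### flow formulas -/

lemma rfmFlow_castSucc {N : ℕ} (lam : Fin (N + 2) → ℝ) (u : ℝ) (x : Fin (N + 1) → ℝ)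
    (j : Fin (N + 1)) :
    rfmFlow lam u x j.castSucc
      = lam j.castSucc * rfmExt u x j.castSucc.castSucc * (1 - x j) := by
  unfold rfmFlow; rw [rfmExt_mid]

lemma rfmFlow_succ {N : ℕ} (lam : Fin (N + 2) → ℝ) (u : ℝ) (x : Fin (N + 1) → ℝ)
    (j : Fin (N + 1)) :
    rfmFlow lam u x j.succ
      = lam j.succ * x j * (1 - rfmExt u x j.succ.succ) := by
  unfold rfmFlow; rw [← Fin.succ_castSucc, rfmExt_mid]

lemma rfmVF_eq {N : ℕ} (lam : Fin (N + 2) → ℝ) (u : ℝ) (x : Fin (N + 1) → ℝ)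
    (j : Fin (N + 1)) :
    rfmVF lam u x j
      = lam j.castSucc * rfmExt u x j.castSucc.castSucc * (1 - x j)
        - lam j.succ * x j * (1 - rfmExt u x j.succ.succ) := by
  unfold rfmVF; rw [rfmFlow_castSucc, rfmFlow_succ]

lemma rfmFlow_zero {N : ℕ} (lam : Fin (N + 2) → ℝ) (u : ℝ) (x : Fin (N + 1) → ℝ) :
    rfmFlow lam u x 0 = lam 0 * u * (1 - x 0) := by
  have h := rfmFlow_castSucc lam u x 0
  rw [Fin.castSucc_zero] at h
  rw [h, Fin.castSucc_zero, rfmExt_zero]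

lemma rfmFlow_last {N : ℕ} (lam : Fin (N + 2) → ℝ) (u : ℝ) (x : Fin (N + 1) → ℝ) :
    rfmFlow lam u x (Fin.last (N + 1)) = lam (Fin.last (N + 1)) * x (Fin.last N) := by
  have h := rfmFlow_succ lam u x (Fin.last N)
  rw [Fin.succ_last] at h
  rw [h]
  simp only [Nat.succ_eq_add_one]
  have h2 : ((Fin.last (N+1)).succ : Fin (N+3)) = Fin.last (N+2) := Fin.succ_last (N+1)
  rw [h2, rfmExt_last]
  ring

/-! ### network constants and basic bounds -/

section Net

variable {m : ℕ} {n : Fin m → ℕ}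
variable (lam : ∀ i : Fin m, Fin (n i + 2) → ℝ) (c0 : Fin m → ℝ) (c : Fin m → Fin m → ℝ)

/-- crude upper bound for all the rates -/
noncomputable def SL : ℝ := ∑ i, ∑ j, lam i j

/-- crude upper bound for the feedback gains -/
noncomputable def SC : ℝ := ∑ i, ∑ k, c i k * lam k (Fin.last (n k + 1))

/-- bound for inputs on `box2` -/
noncomputable def UB : ℝ := (∑ i, c0 i) + 2 * SC lam c

/-- bound for all extended coordinates -/
noncomputable def M0 : ℝ := 2 + UB lam c0 c

noncomputable def CA : ℝ := 1 + SC lam c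

/-- the Lipschitz-type constant -/
noncomputable def Lc : ℝ := SL lam * (5 * CA lam c + 2 * M0 lam c0 c + 2) + 1

/-- bound for the vector field on the cube -/
noncomputable def Cb : ℝ := 2 * SL lam * M0 lam c0 c * (1 + M0 lam c0 c) + 1

/-- ℓ¹ distance between states -/
noncomputable def Dabs (x y : St m n) : ℝ := ∑ i, ∑ j, |x i j - y i j|

def inCube (x : St m n) : Prop := ∀ i j, x i j ∈ Icc (0:ℝ) 1

def box2 (x : St m n) : Prop := ∀ i j, x i j ∈ Icc (-1:ℝ) 2

variable (hlam : ∀ i j, 0 < lam i j) (hc0 : ∀ i, 0 < c0 i) (hc : ∀ i k, 0 ≤ c i k)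

section Bounds

include hlam in
lemma SL_nonneg : 0 ≤ SL lam :=
  Finset.sum_nonneg fun i _ => Finset.sum_nonneg fun j _ => (hlam i j).le

include hlam in
lemma lam_le_SL (i : Fin m) (j : Fin (n i + 2)) : lam i j ≤ SL lam := by
  calc lam i j ≤ ∑ j', lam i j' :=
        Finset.single_le_sum (fun j' _ => (hlam i j').le) (Finset.mem_univ j)
    _ ≤ SL lam :=
        Finset.single_le_sum (f := fun i' => ∑ j', lam i' j')
          (fun i' _ => Finset.sum_nonneg fun j' _ => (hlam i' j').le) (Finset.mem_univ i)

include hlam hc in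
lemma SC_nonneg : 0 ≤ SC lam c :=
  Finset.sum_nonneg fun i _ => Finset.sum_nonneg fun k _ =>
    mul_nonneg (hc i k) (hlam k _).le

include hlam hc in
lemma gain_le_SC (i k : Fin m) : c i k * lam k (Fin.last (n k + 1)) ≤ SC lam c := by
  calc c i k * lam k _ ≤ ∑ k', c i k' * lam k' (Fin.last (n k' + 1)) :=
        Finset.single_le_sum (fun k' _ => mul_nonneg (hc i k') (hlam k' _).le)
          (Finset.mem_univ k)
    _ ≤ SC lam c :=
        Finset.single_le_sum
          (f := fun i' => ∑ k', c i' k' * lam k' (Fin.last (n k' + 1)))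
          (fun i' _ => Finset.sum_nonneg fun k' _ => mul_nonneg (hc i' k') (hlam k' _).le)
          (Finset.mem_univ i)

include hlam hc0 hc in
lemma UB_nonneg : 0 ≤ UB lam c0 c :=
  add_nonneg (Finset.sum_nonneg fun i _ => (hc0 i).le)
    (by have := SC_nonneg lam c hlam hc; linarith)

include hlam hc0 hc in
lemma M0_ge_two : 2 ≤ M0 lam c0 c := by
  have := UB_nonneg lam c0 c hlam hc0 hc
  unfold M0; linarith

include hlam hc in
lemma CA_ge_one : 1 ≤ CA lam c := by
  have := SC_nonneg lam c hlam hc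
  unfold CA; linarith

include hlam hc0 hc in
lemma Lc_nonneg : 0 ≤ Lc lam c0 c := by
  have h1 := SL_nonneg lam hlam
  have h2 := CA_ge_one lam c hlam hc
  have h3 := M0_ge_two lam c0 c hlam hc0 hc
  have h4 : (0:ℝ) ≤ 5 * CA lam c + 2 * M0 lam c0 c + 2 := by linarith
  have := mul_nonneg h1 h4
  unfold Lc; linarith

include hlam hc0 hc in
lemma Cb_pos : 0 < Cb lam c0 c := by
  have h1 := SL_nonneg lam hlam
  have h3 := M0_ge_two lam c0 c hlam hc0 hc
  have h4 : (0:ℝ) ≤ 2 * SL lam * M0 lam c0 c * (1 + M0 lam c0 c) := by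
    have : (0:ℝ) ≤ M0 lam c0 c := by linarith
    have : (0:ℝ) ≤ 1 + M0 lam c0 c := by linarith
    positivity
  unfold Cb; linarith

end Bounds

lemma Dabs_nonneg (x y : St m n) : 0 ≤ Dabs x y :=
  Finset.sum_nonneg fun i _ => Finset.sum_nonneg fun j _ => abs_nonneg _

lemma abs_le_Dabs (x y : St m n) (i : Fin m) (j : Fin (n i + 1)) :
    |x i j - y i j| ≤ Dabs x y := by
  calc |x i j - y i j| ≤ ∑ j', |x i j' - y i j'| :=
        Finset.single_le_sum (f := fun j' => |x i j' - y i j'|)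
          (fun j' _ => abs_nonneg _) (Finset.mem_univ j)
    _ ≤ Dabs x y :=
        Finset.single_le_sum (f := fun i' => ∑ j', |x i' j' - y i' j'|)
          (fun i' _ => Finset.sum_nonneg fun j' _ => abs_nonneg _) (Finset.mem_univ i)

/-! ### netInput estimates -/

include hlam hc0 hc in
lemma netInput_pos {x : St m n} (hx : ∀ i j, 0 ≤ x i j) (i : Fin m) :
    0 < netInput lam c0 c x i := by
  unfold netInput
  have : (0:ℝ) ≤ ∑ k, c i k * (lam k (Fin.last (n k + 1)) * x k (Fin.last (n k))) :=
    Finset.sum_nonneg fun k _ => mul_nonneg (hc i k)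
      (mul_nonneg (hlam k _).le (hx k _))
  linarith [hc0 i]

include hlam hc in
lemma netInput_mono {x y : St m n} (hxy : ∀ i j, x i j ≤ y i j) (i : Fin m) :
    netInput lam c0 c x i ≤ netInput lam c0 c y i := by
  unfold netInput
  have : ∀ k ∈ Finset.univ, c i k * (lam k (Fin.last (n k + 1)) * x k (Fin.last (n k)))
      ≤ c i k * (lam k (Fin.last (n k + 1)) * y k (Fin.last (n k))) := fun k _ =>
    mul_le_mul_of_nonneg_left
      (mul_le_mul_of_nonneg_left (hxy k _) (hlam k _).le) (hc i k)
  have := Finset.sum_le_sum this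
  linarith

include hlam hc0 hc in
lemma netInput_abs_le {x : St m n} (hx : box2 x) (i : Fin m) :
    |netInput lam c0 c x i| ≤ UB lam c0 c := by
  have hrow : ∑ k, c i k * lam k (Fin.last (n k + 1)) ≤ SC lam c :=
    Finset.single_le_sum
      (f := fun i' => ∑ k', c i' k' * lam k' (Fin.last (n k' + 1)))
      (fun i' _ => Finset.sum_nonneg fun k' _ => mul_nonneg (hc i' k') (hlam k' _).le)
      (Finset.mem_univ i)
  have h1 : |∑ k, c i k * (lam k (Fin.last (n k + 1)) * x k (Fin.last (n k)))|
      ≤ (∑ k, c i k * lam k (Fin.last (n k + 1))) * 2 := by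
    rw [Finset.sum_mul]
    refine (Finset.abs_sum_le_sum_abs _ _).trans (Finset.sum_le_sum fun k _ => ?_)
    have hxk : |x k (Fin.last (n k))| ≤ 2 := by
      rcases hx k (Fin.last (n k)) with ⟨hl, hr⟩
      rw [abs_le]; constructor <;> linarith
    rw [abs_mul, abs_mul, abs_of_nonneg (hc i k), abs_of_nonneg (hlam k _).le, mul_assoc]
    exact mul_le_mul_of_nonneg_left
      (mul_le_mul_of_nonneg_left hxk (hlam k _).le) (hc i k)
  have hc0i : c0 i ≤ ∑ i', c0 i' :=
    Finset.single_le_sum (fun i' _ => (hc0 i').le) (Finset.mem_univ i)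
  unfold netInput UB
  calc |c0 i + ∑ k, c i k * (lam k (Fin.last (n k + 1)) * x k (Fin.last (n k)))|
      ≤ |c0 i| + |∑ k, c i k * (lam k (Fin.last (n k + 1)) * x k (Fin.last (n k)))| :=
        abs_add_le _ _
    _ ≤ (∑ i', c0 i') + 2 * SC lam c := by
        rw [abs_of_pos (hc0 i)]
        have := h1.trans (by nlinarith : (∑ k, c i k * lam k (Fin.last (n k + 1))) * 2 ≤ 2 * SC lam c)
        linarith

include hlam hc in
lemma netInput_sub_abs (x y : St m n) (i : Fin m) :
    |netInput lam c0 c x i - netInput lam c0 c y i| ≤ SC lam c * Dabs x y := by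
  have hrow : ∑ k, c i k * lam k (Fin.last (n k + 1)) ≤ SC lam c :=
    Finset.single_le_sum
      (f := fun i' => ∑ k', c i' k' * lam k' (Fin.last (n k' + 1)))
      (fun i' _ => Finset.sum_nonneg fun k' _ => mul_nonneg (hc i' k') (hlam k' _).le)
      (Finset.mem_univ i)
  have h0 : netInput lam c0 c x i - netInput lam c0 c y i
      = ∑ k, c i k * lam k (Fin.last (n k + 1))
          * (x k (Fin.last (n k)) - y k (Fin.last (n k))) := by
    unfold netInput
    rw [add_sub_add_left_eq_sub, ← Finset.sum_sub_distrib]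
    exact Finset.sum_congr rfl fun k _ => by ring
  rw [h0]
  have hD := Dabs_nonneg x y
  calc |∑ k, c i k * lam k (Fin.last (n k + 1))
          * (x k (Fin.last (n k)) - y k (Fin.last (n k)))|
      ≤ ∑ k, c i k * lam k (Fin.last (n k + 1)) * Dabs x y := by
        refine (Finset.abs_sum_le_sum_abs _ _).trans (Finset.sum_le_sum fun k _ => ?_)
        rw [abs_mul, abs_of_nonneg (mul_nonneg (hc i k) (hlam k _).le)]
        exact mul_le_mul_of_nonneg_left (abs_le_Dabs x y k _)
          (mul_nonneg (hc i k) (hlam k _).le)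
    _ = (∑ k, c i k * lam k (Fin.last (n k + 1))) * Dabs x y := by rw [Finset.sum_mul]
    _ ≤ SC lam c * Dabs x y := mul_le_mul_of_nonneg_right hrow hD

lemma inCube.box2' {x : St m n} (hx : inCube x) : box2 x := fun i j =>
  ⟨by linarith [(hx i j).1], by linarith [(hx i j).2]⟩

/-! ### extended-state estimates -/

include hlam hc0 hc in
lemma ext_nonneg {x : St m n} (hx : inCube x) (i : Fin m) (k : Fin (n i + 3)) :
    0 ≤ rfmExt (netInput lam c0 c x i) (x i) k := by
  have hu : 0 < netInput lam c0 c x i :=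
    netInput_pos lam c0 c hlam hc0 hc (fun i' j' => (hx i' j').1) i
  rcases rfmExt_cases (netInput lam c0 c x i) (netInput lam c0 c x i) (x i) (x i) k with
    ⟨h1, _⟩ | ⟨h1, _⟩ | ⟨j', h1, _⟩
  · rw [h1]; exact hu.le
  · rw [h1]
  · rw [h1]; exact (hx i j').1

lemma ext_succ_le_one {x : St m n} (hx : inCube x) (i : Fin m) (k : Fin (n i + 2)) :
    rfmExt (netInput lam c0 c x i) (x i) k.succ ≤ 1 := by
  rcases rfmExt_succ_cases (netInput lam c0 c x i) (x i) k with h1 | ⟨j', h1⟩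
  · rw [h1]; norm_num
  · rw [h1]; exact (hx i j').2

include hlam hc0 hc in
lemma ext_abs_le {x : St m n} (hx : box2 x) (i : Fin m) (k : Fin (n i + 3)) :
    |rfmExt (netInput lam c0 c x i) (x i) k| ≤ M0 lam c0 c := by
  have hM2 := M0_ge_two lam c0 c hlam hc0 hc
  have hUB : UB lam c0 c ≤ M0 lam c0 c := by unfold M0; linarith
  rcases rfmExt_cases (netInput lam c0 c x i) (netInput lam c0 c x i) (x i) (x i) k with
    ⟨h1, _⟩ | ⟨h1, _⟩ | ⟨j', h1, _⟩
  · rw [h1]; exact (netInput_abs_le lam c0 c hlam hc0 hc hx i).trans hUB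
  · rw [h1]; rw [abs_zero]; linarith
  · rw [h1]
    rcases hx i j' with ⟨hl, hr⟩
    rw [abs_le]; constructor <;> linarith

include hlam hc in
lemma ext_mono {x w : St m n} (hxw : ∀ i' j', x i' j' ≤ w i' j') (i : Fin m)
    (k : Fin (n i + 3)) :
    rfmExt (netInput lam c0 c x i) (x i) k ≤ rfmExt (netInput lam c0 c w i) (w i) k := by
  have hu : netInput lam c0 c x i ≤ netInput lam c0 c w i :=
    netInput_mono lam c0 c hlam hc hxw i
  rcases rfmExt_cases (netInput lam c0 c x i) (netInput lam c0 c w i) (x i) (w i) k with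
    ⟨h1, h2⟩ | ⟨h1, h2⟩ | ⟨j', h1, h2⟩
  · rw [h1, h2]; exact hu
  · rw [h1, h2]
  · rw [h1, h2]; exact hxw i j'

include hlam hc0 hc in
lemma ext_sub_abs {x y : St m n} (i : Fin m) (k : Fin (n i + 3)) :
    |rfmExt (netInput lam c0 c x i) (x i) k - rfmExt (netInput lam c0 c y i) (y i) k|
      ≤ CA lam c * Dabs x y := by
  have hD0 := Dabs_nonneg x y
  have hSC := SC_nonneg lam c hlam hc
  rcases rfmExt_cases (netInput lam c0 c x i) (netInput lam c0 c y i) (x i) (y i) k with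
    ⟨h1, h2⟩ | ⟨h1, h2⟩ | ⟨j', h1, h2⟩
  · rw [h1, h2]
    refine (netInput_sub_abs lam c0 c hlam hc x y i).trans ?_
    unfold CA; nlinarith
  · rw [h1, h2, sub_self, abs_zero]
    have : (0:ℝ) ≤ CA lam c := by unfold CA; linarith
    positivity
  · rw [h1, h2]
    refine (abs_le_Dabs x y i j').trans ?_
    unfold CA; nlinarith

/-! ### the key structural properties of the vector field -/

include hlam hc0 hc in
lemma netVF_mono {x w : St m n} (hx : inCube x) (hw : inCube w)
    (hxw : ∀ i' j', x i' j' ≤ w i' j') {i : Fin m} {j : Fin (n i + 1)}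
    (hij : x i j = w i j) :
    netVF lam c0 c x i j ≤ netVF lam c0 c w i j := by
  have hext := ext_mono lam c0 c hlam hc hxw i
  have hextx0 := ext_nonneg lam c0 c hlam hc0 hc hx i
  unfold netVF
  rw [rfmVF_eq, rfmVF_eq]
  have h1mx : 0 ≤ 1 - x i j := by linarith [(hx i j).2]
  have t1 : lam i j.castSucc * rfmExt (netInput lam c0 c x i) (x i) j.castSucc.castSucc * (1 - x i j)
      ≤ lam i j.castSucc * rfmExt (netInput lam c0 c w i) (w i) j.castSucc.castSucc * (1 - w i j) := by
    rw [← hij]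
    exact mul_le_mul_of_nonneg_right
      (mul_le_mul_of_nonneg_left (hext _) (hlam i _).le) h1mx
  have t2 : lam i j.succ * w i j * (1 - rfmExt (netInput lam c0 c w i) (w i) j.succ.succ)
      ≤ lam i j.succ * x i j * (1 - rfmExt (netInput lam c0 c x i) (x i) j.succ.succ) := by
    rw [← hij]
    have h2 : 1 - rfmExt (netInput lam c0 c w i) (w i) j.succ.succ
        ≤ 1 - rfmExt (netInput lam c0 c x i) (x i) j.succ.succ := by
      linarith [hext j.succ.succ]
    exact mul_le_mul_of_nonneg_left h2 (mul_nonneg (hlam i _).le (hx i j).1)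
  linarith

include hlam hc0 hc in
lemma netVF_sign0 {x : St m n} (hx : inCube x) {i : Fin m} {j : Fin (n i + 1)}
    (h0 : x i j = 0) :
    0 ≤ netVF lam c0 c x i j := by
  have hA := ext_nonneg lam c0 c hlam hc0 hc hx i j.castSucc.castSucc
  unfold netVF
  rw [rfmVF_eq, h0]
  have : (0:ℝ) ≤ lam i j.castSucc * rfmExt (netInput lam c0 c x i) (x i) j.castSucc.castSucc :=
    mul_nonneg (hlam i _).le hA
  nlinarith

include hlam hc0 hc in
lemma netVF_sign1 {x : St m n} (hx : inCube x) {i : Fin m} {j : Fin (n i + 1)}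
    (h1 : x i j = 1) :
    netVF lam c0 c x i j ≤ 0 := by
  have hA : rfmExt (netInput lam c0 c x i) (x i) j.succ.succ ≤ 1 :=
    ext_succ_le_one lam c0 c hx i j.succ
  unfold netVF
  rw [rfmVF_eq, h1]
  have h2 : (0:ℝ) ≤ lam i j.succ * 1 * (1 - rfmExt (netInput lam c0 c x i) (x i) j.succ.succ) := by
    have := (hlam i j.succ).le
    nlinarith
  nlinarith

include hlam hc0 hc in
lemma netVF_lip {x y : St m n} (hx : box2 x) (hy : box2 y) (i : Fin m) (j : Fin (n i + 1)) :
    |netVF lam c0 c x i j - netVF lam c0 c y i j| ≤ Lc lam c0 c * Dabs x y := by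
  have hD0 := Dabs_nonneg x y
  have hCA1 := CA_ge_one lam c hlam hc
  have hM2 := M0_ge_two lam c0 c hlam hc0 hc
  have hSL0 := SL_nonneg lam hlam
  have hdiff := ext_sub_abs lam c0 c hlam hc0 hc (x := x) (y := y) i
  have habsy := ext_abs_le lam c0 c hlam hc0 hc hy i
  have habsx := ext_abs_le lam c0 c hlam hc0 hc hx i
  have hL1 := lam_le_SL lam hlam i j.castSucc
  have hL2 := lam_le_SL lam hlam i j.succ
  have hL1p := (hlam i j.castSucc).le
  have hL2p := (hlam i j.succ).le
  set D := Dabs x y with hDdef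
  set A1x := rfmExt (netInput lam c0 c x i) (x i) j.castSucc.castSucc with hA1x
  set A1y := rfmExt (netInput lam c0 c y i) (y i) j.castSucc.castSucc with hA1y
  set A2x := rfmExt (netInput lam c0 c x i) (x i) j.succ.succ with hA2x
  set A2y := rfmExt (netInput lam c0 c y i) (y i) j.succ.succ with hA2y
  unfold netVF
  rw [rfmVF_eq, rfmVF_eq]
  have b1 : |A1x - A1y| ≤ CA lam c * D := hdiff _
  have b2 : |1 - x i j| ≤ 3 := by
    rcases hx i j with ⟨hl, hr⟩; rw [abs_le]; constructor <;> linarith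
  have b3 : |A1y| ≤ M0 lam c0 c := habsy _
  have b4 : |y i j - x i j| ≤ D := by rw [abs_sub_comm]; exact abs_le_Dabs x y i j
  have b5 : |x i j - y i j| ≤ D := abs_le_Dabs x y i j
  have b6 : |1 - A2x| ≤ 1 + M0 lam c0 c := by
    have := habsx j.succ.succ
    rw [← hA2x] at this
    have h := abs_le.1 this
    rw [abs_le]; constructor <;> linarith [h.1, h.2]
  have b7 : |y i j| ≤ 2 := by
    rcases hy i j with ⟨hl, hr⟩; rw [abs_le]; constructor <;> linarith
  have b8 : |A2y - A2x| ≤ CA lam c * D := by rw [abs_sub_comm]; exact hdiff _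
  have hT1 : |lam i j.castSucc * A1x * (1 - x i j) - lam i j.castSucc * A1y * (1 - y i j)|
      ≤ SL lam * (3 * (CA lam c * D) + M0 lam c0 c * D) := by
    have e : lam i j.castSucc * A1x * (1 - x i j) - lam i j.castSucc * A1y * (1 - y i j)
        = lam i j.castSucc * ((A1x - A1y) * (1 - x i j) + A1y * (y i j - x i j)) := by ring
    rw [e, abs_mul, abs_of_nonneg hL1p]
    have i1 : |(A1x - A1y) * (1 - x i j)| ≤ CA lam c * D * 3 := by
      rw [abs_mul]
      exact mul_le_mul b1 b2 (abs_nonneg _) (by positivity)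
    have i2 : |A1y * (y i j - x i j)| ≤ M0 lam c0 c * D := by
      rw [abs_mul]
      exact mul_le_mul b3 b4 (abs_nonneg _) (by linarith)
    have i3 : |(A1x - A1y) * (1 - x i j) + A1y * (y i j - x i j)|
        ≤ 3 * (CA lam c * D) + M0 lam c0 c * D := by
      refine (abs_add_le _ _).trans ?_; linarith
    exact mul_le_mul hL1 i3 (abs_nonneg _) hSL0
  have hT2 : |lam i j.succ * x i j * (1 - A2x) - lam i j.succ * y i j * (1 - A2y)|
      ≤ SL lam * ((1 + M0 lam c0 c) * D + 2 * (CA lam c * D)) := by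
    have e : lam i j.succ * x i j * (1 - A2x) - lam i j.succ * y i j * (1 - A2y)
        = lam i j.succ * ((x i j - y i j) * (1 - A2x) + y i j * (A2y - A2x)) := by ring
    rw [e, abs_mul, abs_of_nonneg hL2p]
    have i1 : |(x i j - y i j) * (1 - A2x)| ≤ D * (1 + M0 lam c0 c) := by
      rw [abs_mul]
      exact mul_le_mul b5 b6 (abs_nonneg _) hD0
    have i2 : |y i j * (A2y - A2x)| ≤ 2 * (CA lam c * D) := by
      rw [abs_mul]
      exact mul_le_mul b7 b8 (abs_nonneg _) (by norm_num)
    have i3 : |(x i j - y i j) * (1 - A2x) + y i j * (A2y - A2x)|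
        ≤ (1 + M0 lam c0 c) * D + 2 * (CA lam c * D) := by
      refine (abs_add_le _ _).trans ?_; linarith
    exact mul_le_mul hL2 i3 (abs_nonneg _) hSL0
  have final : |lam i j.castSucc * A1x * (1 - x i j) - lam i j.succ * x i j * (1 - A2x)
      - (lam i j.castSucc * A1y * (1 - y i j) - lam i j.succ * y i j * (1 - A2y))|
      ≤ Lc lam c0 c * D := by
    have e : lam i j.castSucc * A1x * (1 - x i j) - lam i j.succ * x i j * (1 - A2x)
        - (lam i j.castSucc * A1y * (1 - y i j) - lam i j.succ * y i j * (1 - A2y))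
        = (lam i j.castSucc * A1x * (1 - x i j) - lam i j.castSucc * A1y * (1 - y i j))
          - (lam i j.succ * x i j * (1 - A2x) - lam i j.succ * y i j * (1 - A2y)) := by ring
    rw [e]
    refine (abs_sub _ _).trans ?_
    have : SL lam * (3 * (CA lam c * D) + M0 lam c0 c * D)
        + SL lam * ((1 + M0 lam c0 c) * D + 2 * (CA lam c * D)) ≤ Lc lam c0 c * D := by
      unfold Lc; nlinarith
    linarith
  exact final

include hlam hc0 hc in
lemma netVF_bound {x : St m n} (hx : inCube x) (i : Fin m) (j : Fin (n i + 1)) :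
    |netVF lam c0 c x i j| ≤ Cb lam c0 c := by
  have hM2 := M0_ge_two lam c0 c hlam hc0 hc
  have hSL0 := SL_nonneg lam hlam
  have habsx := ext_abs_le lam c0 c hlam hc0 hc (inCube.box2' hx) i
  have hL1 := lam_le_SL lam hlam i j.castSucc
  have hL2 := lam_le_SL lam hlam i j.succ
  have hL1p := (hlam i j.castSucc).le
  have hL2p := (hlam i j.succ).le
  unfold netVF
  rw [rfmVF_eq]
  have b1 : |rfmExt (netInput lam c0 c x i) (x i) j.castSucc.castSucc| ≤ M0 lam c0 c := habsx _
  have b2 : |1 - x i j| ≤ 1 := by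
    rcases hx i j with ⟨hl, hr⟩; rw [abs_le]; constructor <;> linarith
  have b3 : |x i j| ≤ 1 := by
    rcases hx i j with ⟨hl, hr⟩; rw [abs_le]; constructor <;> linarith
  have b4 : |1 - rfmExt (netInput lam c0 c x i) (x i) j.succ.succ| ≤ 1 + M0 lam c0 c := by
    have h := abs_le.1 (habsx j.succ.succ)
    rw [abs_le]; constructor <;> linarith [h.1, h.2]
  have hT1 : |lam i j.castSucc * rfmExt (netInput lam c0 c x i) (x i) j.castSucc.castSucc * (1 - x i j)|
      ≤ SL lam * M0 lam c0 c := by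
    rw [abs_mul, abs_mul, abs_of_nonneg hL1p]
    have h2 : lam i j.castSucc * |rfmExt (netInput lam c0 c x i) (x i) j.castSucc.castSucc|
        ≤ SL lam * M0 lam c0 c := mul_le_mul hL1 b1 (abs_nonneg _) hSL0
    calc lam i j.castSucc * |rfmExt (netInput lam c0 c x i) (x i) j.castSucc.castSucc| * |1 - x i j|
        ≤ (SL lam * M0 lam c0 c) * 1 :=
          mul_le_mul h2 b2 (abs_nonneg _) (mul_nonneg hSL0 (by linarith))
      _ = SL lam * M0 lam c0 c := by ring
  have hT2 : |lam i j.succ * x i j * (1 - rfmExt (netInput lam c0 c x i) (x i) j.succ.succ)|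
      ≤ SL lam * (1 + M0 lam c0 c) := by
    rw [abs_mul, abs_mul, abs_of_nonneg hL2p]
    have h2 : lam i j.succ * |x i j| ≤ SL lam * 1 :=
      mul_le_mul hL2 b3 (abs_nonneg _) hSL0
    calc lam i j.succ * |x i j| * |1 - rfmExt (netInput lam c0 c x i) (x i) j.succ.succ|
        ≤ (SL lam * 1) * (1 + M0 lam c0 c) :=
          mul_le_mul h2 b4 (abs_nonneg _) (mul_nonneg hSL0 zero_le_one)
      _ = SL lam * (1 + M0 lam c0 c) := by ring
  refine (abs_sub _ _).trans ?_
  have h5 : (0:ℝ) ≤ SL lam * (2 * M0 lam c0 c * M0 lam c0 c - 1) :=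
    mul_nonneg hSL0 (by nlinarith)
  have : SL lam * M0 lam c0 c + SL lam * (1 + M0 lam c0 c) ≤ Cb lam c0 c := by
    unfold Cb; nlinarith
  linarith

/-! ### equilibria -/

/-- steady-state throughput of chain `i` -/
noncomputable def Rout (e : St m n) (i : Fin m) : ℝ :=
  lam i (Fin.last (n i + 1)) * e i (Fin.last (n i))

lemma netInput_eq_Rout (e : St m n) (i : Fin m) :
    netInput lam c0 c e i = c0 i + ∑ k, c i k * Rout lam e k := rfl

lemma flows_eq {e : St m n} (hvf : netVF lam c0 c e = 0) (i : Fin m) (k : Fin (n i + 2)) :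
    rfmFlow (lam i) (netInput lam c0 c e i) (e i) k = Rout lam e i := by
  have hlast : rfmFlow (lam i) (netInput lam c0 c e i) (e i) (Fin.last (n i + 1))
      = Rout lam e i := rfmFlow_last _ _ _
  induction k using Fin.reverseInduction with
  | last => exact hlast
  | cast j ih =>
    have hz : netVF lam c0 c e i j = 0 := by rw [hvf]; rfl
    unfold netVF rfmVF at hz
    rw [sub_eq_zero] at hz
    rw [hz]; exact ih

include hlam hc0 hc in
lemma Rout_nonneg {e : St m n} (he : inCube e) (i : Fin m) : 0 ≤ Rout lam e i :=
  mul_nonneg (hlam i _).le (he i _).1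

include hlam hc0 hc in
lemma Rout_pos {e : St m n} (he : inCube e) (hvf : netVF lam c0 c e = 0) (i : Fin m) :
    0 < Rout lam e i := by
  rcases lt_or_eq_of_le (Rout_nonneg lam c0 c hlam hc0 hc he i) with h | h
  · exact h
  exfalso
  have hu : 0 < netInput lam c0 c e i :=
    netInput_pos lam c0 c hlam hc0 hc (fun i' j' => (he i' j').1) i
  have hflow : ∀ k, rfmFlow (lam i) (netInput lam c0 c e i) (e i) k = 0 := by
    intro k; rw [flows_eq lam c0 c hvf i k, ← h]
  have hone : ∀ j : Fin (n i + 1), e i j = 1 := by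
    intro j
    induction j using Fin.induction with
    | zero =>
      have h0 := hflow 0
      rw [rfmFlow_zero] at h0
      rcases mul_eq_zero.1 h0 with h1 | h1
      · rcases mul_eq_zero.1 h1 with h2 | h2
        · exact absurd h2 (ne_of_gt (hlam i 0))
        · exact absurd h2 (ne_of_gt hu)
      · linarith
    | succ j ih =>
      have h0 := hflow j.castSucc.succ
      rw [rfmFlow_succ, rfmExt_mid', ih] at h0
      rcases mul_eq_zero.1 h0 with h1 | h1
      · rcases mul_eq_zero.1 h1 with h2 | h2
        · exact absurd h2 (ne_of_gt (hlam i _))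
        · norm_num at h2
      · linarith
  have hl := hone (Fin.last (n i))
  have : Rout lam e i = lam i (Fin.last (n i + 1)) * 1 := by unfold Rout; rw [hl]
  rw [← h] at this
  have := this.symm
  rw [mul_one] at this
  exact absurd this (ne_of_gt (hlam i _))

include hlam hc0 hc in
lemma equilibrium_interior {e : St m n} (he : inCube e) (hvf : netVF lam c0 c e = 0)
    (i : Fin m) (j : Fin (n i + 1)) : e i j ∈ Ioo (0:ℝ) 1 := by
  have hR := Rout_pos lam c0 c hlam hc0 hc he hvf i
  have hA0 := ext_nonneg lam c0 c hlam hc0 hc he i j.castSucc.castSucc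
  have hA1 : rfmExt (netInput lam c0 c e i) (e i) j.succ.succ ≤ 1 :=
    ext_succ_le_one lam c0 c he i j.succ
  have hf1 := flows_eq lam c0 c hvf i j.castSucc
  have hf2 := flows_eq lam c0 c hvf i j.succ
  rw [rfmFlow_castSucc] at hf1
  rw [rfmFlow_succ] at hf2
  constructor
  · by_contra hle
    push_neg at hle
    have hfac : 0 ≤ lam i j.succ * (1 - rfmExt (netInput lam c0 c e i) (e i) j.succ.succ) :=
      mul_nonneg (hlam i j.succ).le (by linarith)
    have heq : lam i j.succ * e i j * (1 - rfmExt (netInput lam c0 c e i) (e i) j.succ.succ)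
        = (lam i j.succ * (1 - rfmExt (netInput lam c0 c e i) (e i) j.succ.succ)) * e i j := by
      ring
    have hle2 := mul_nonpos_of_nonneg_of_nonpos hfac hle
    rw [← heq, hf2] at hle2
    linarith
  · by_contra hge
    push_neg at hge
    have hfac : 0 ≤ lam i j.castSucc * rfmExt (netInput lam c0 c e i) (e i) j.castSucc.castSucc :=
      mul_nonneg (hlam i j.castSucc).le hA0
    have hle2 := mul_nonpos_of_nonneg_of_nonpos hfac (by linarith : 1 - e i j ≤ 0)
    rw [hf1] at hle2
    linarith

include hlam hc0 hc in
lemma equilibrium_unique {d e : St m n} (hd : inCube d) (he : inCube e)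
    (hdvf : netVF lam c0 c d = 0) (hevf : netVF lam c0 c e = 0)
    (hde : ∀ i j, d i j ≤ e i j) : d = e := by
  have hRd := Rout_pos lam c0 c hlam hc0 hc hd hdvf
  have hRe := Rout_pos lam c0 c hlam hc0 hc he hevf
  have hRle : ∀ i, Rout lam d i ≤ Rout lam e i := fun i =>
    mul_le_mul_of_nonneg_left (hde i _) (hlam i _).le
  -- entry flow identities
  have hentry : ∀ (x : St m n), netVF lam c0 c x = 0 →
      ∀ i, lam i 0 * netInput lam c0 c x i * (1 - x i 0) = Rout lam x i := by
    intro x hx i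
    have := flows_eq lam c0 c hx i 0
    rw [rfmFlow_zero] at this
    exact this
  have hReq : ∀ i, Rout lam d i = Rout lam e i := by
    by_contra hcon
    push_neg at hcon
    obtain ⟨i0, hi0⟩ := hcon
    have hlt : Rout lam d i0 < Rout lam e i0 := lt_of_le_of_ne (hRle i0) hi0
    have hne : (Finset.univ : Finset (Fin m)).Nonempty := ⟨i0, Finset.mem_univ _⟩
    set θ := Finset.univ.sup' hne (fun k => Rout lam e k / Rout lam d k) with hθdef
    have hθk : ∀ k, Rout lam e k / Rout lam d k ≤ θ := by
      intro k; rw [hθdef]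
      exact Finset.le_sup' (fun k => Rout lam e k / Rout lam d k) (Finset.mem_univ k)
    obtain ⟨i1, _, hi1⟩ := Finset.exists_mem_eq_sup' hne
      (fun k => Rout lam e k / Rout lam d k)
    have hθ1 : 1 < θ :=
      lt_of_lt_of_le ((one_lt_div (hRd i0)).2 hlt) (hθk i0)
    have hSk : ∀ k, Rout lam e k ≤ θ * Rout lam d k := fun k => by
      have := (div_le_iff₀ (hRd k)).1 (hθk k)
      linarith
    have hS1 : Rout lam e i1 = θ * Rout lam d i1 := by
      rw [hθdef, hi1]
      rw [div_mul_eq_mul_div, mul_div_assoc, div_self (ne_of_gt (hRd i1)), mul_one]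
    -- v < θ u
    have huv : netInput lam c0 c e i1 < θ * netInput lam c0 c d i1 := by
      rw [netInput_eq_Rout, netInput_eq_Rout]
      have hsum : ∑ k, c i1 k * Rout lam e k ≤ ∑ k, c i1 k * (θ * Rout lam d k) :=
        Finset.sum_le_sum fun k _ => mul_le_mul_of_nonneg_left (hSk k) (hc i1 k)
      have hexp : θ * (c0 i1 + ∑ k, c i1 k * Rout lam d k)
          = θ * c0 i1 + ∑ k, c i1 k * (θ * Rout lam d k) := by
        rw [mul_add, Finset.mul_sum]
        congr 1
        exact Finset.sum_congr rfl fun k _ => by ring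
      have hc01 : c0 i1 < θ * c0 i1 := by nlinarith [hc0 i1]
      rw [hexp]; linarith
    -- v ≥ θ u
    have h1d := hentry d hdvf i1
    have h1e := hentry e hevf i1
    have hd0 : d i1 0 < 1 :=
      (equilibrium_interior lam c0 c hlam hc0 hc hd hdvf i1 0).2
    have he0 : e i1 0 < 1 :=
      (equilibrium_interior lam c0 c hlam hc0 hc he hevf i1 0).2
    have hde0 : d i1 0 ≤ e i1 0 := hde i1 0
    have hupos : 0 < netInput lam c0 c d i1 :=
      netInput_pos lam c0 c hlam hc0 hc (fun i' j' => (hd i' j').1) i1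
    have hLpos := hlam i1 0
    have hbpos : (0:ℝ) < 1 - e i1 0 := by linarith
    have hθpos : (0:ℝ) < θ := by linarith
    -- L * v * (1 - e0) = θ * Rout d i1 = θ * (L * u * (1 - d0)) ≥ θ * L * u * (1 - e0)
    have hkey : lam i1 0 * netInput lam c0 c e i1 * (1 - e i1 0)
        = θ * (lam i1 0 * netInput lam c0 c d i1 * (1 - d i1 0)) := by
      rw [h1d, h1e, hS1]
    nlinarith [mul_pos (mul_pos hLpos hupos) hθpos,
      mul_pos (mul_pos hLpos hbpos) (sub_pos.2 huv),
      mul_le_mul_of_nonneg_left hde0 (mul_pos (mul_pos hθpos hLpos) hupos).le]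
  have hinp : ∀ i, netInput lam c0 c d i = netInput lam c0 c e i := by
    intro i
    rw [netInput_eq_Rout, netInput_eq_Rout]
    congr 1
    exact Finset.sum_congr rfl fun k _ => by rw [hReq k]
  funext i
  funext j
  induction j using Fin.reverseInduction with
  | last =>
    have := hReq i
    unfold Rout at this
    exact mul_left_cancel₀ (ne_of_gt (hlam i _)) this
  | cast j ih =>
    have hfd := flows_eq lam c0 c hdvf i j.castSucc.succ
    have hfe := flows_eq lam c0 c hevf i j.castSucc.succ
    rw [rfmFlow_succ, rfmExt_mid'] at hfd hfe
    rw [ih] at hfd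
    rw [hReq i] at hfd
    rw [← hfe] at hfd
    have hlt1 : e i j.succ < 1 :=
      (equilibrium_interior lam c0 c hlam hc0 hc he hevf i j.succ).2
    have hne2 : lam i j.castSucc.succ * (1 - e i j.succ) ≠ 0 :=
      ne_of_gt (mul_pos (hlam i _) (by linarith))
    have : d i j.castSucc * (lam i j.castSucc.succ * (1 - e i j.succ))
        = e i j.castSucc * (lam i j.castSucc.succ * (1 - e i j.succ)) := by
      nlinarith [hfd]
    exact mul_right_cancel₀ hne2 this

end Net

/-! ### right-slope machinery and a Grönwall-type nonpositivity principle -/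

open scoped Topology

lemma slope_max_tendsto {g : ℝ → ℝ} {v : ℝ} {t : ℝ} (hg : HasDerivWithinAt g v (Ici t) t) :
    Tendsto (fun z => (z - t)⁻¹ * (max (g z) 0 - max (g t) 0)) (nhdsWithin t (Ioi t))
      (nhds (if 0 < g t then v else if g t < 0 then 0 else max v 0)) := by
  have hslope : Tendsto (fun z => (z - t)⁻¹ * (g z - g t)) (nhdsWithin t (Ioi t)) (nhds v) := by
    have h1 := hasDerivWithinAt_iff_tendsto_slope.1 hg
    rw [Set.Ici_sdiff_left] at h1
    exact h1.congr fun z => by rw [slope_def_field, div_eq_inv_mul]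
  have hcont : Tendsto g (nhdsWithin t (Ioi t)) (nhds (g t)) :=
    hg.continuousWithinAt.tendsto.mono_left (nhdsWithin_mono t Ioi_subset_Ici_self)
  rcases lt_trichotomy (g t) 0 with hneg | hzero | hpos
  · rw [if_neg (by linarith), if_pos hneg]
    have hev : ∀ᶠ z in nhdsWithin t (Ioi t), g z < 0 := hcont (Iio_mem_nhds hneg)
    refine Tendsto.congr' ?_ tendsto_const_nhds
    filter_upwards [hev] with z hz
    rw [max_eq_right hz.le, max_eq_right hneg.le]; ring
  · rw [if_neg (by rw [hzero]; exact lt_irrefl 0), if_neg (by rw [hzero]; exact lt_irrefl 0)]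
    have heq : (fun z => max ((z - t)⁻¹ * (g z - g t)) 0) =ᶠ[nhdsWithin t (Ioi t)]
        (fun z => (z - t)⁻¹ * (max (g z) 0 - max (g t) 0)) := by
      filter_upwards [self_mem_nhdsWithin] with z hz
      have hzpos : (0:ℝ) < z - t := sub_pos.2 hz
      rw [hzero, sub_zero, max_eq_right le_rfl, sub_zero,
        mul_max_of_nonneg _ _ (inv_nonneg.2 hzpos.le), mul_zero]
    exact Tendsto.congr' heq (hslope.max tendsto_const_nhds)
  · rw [if_pos hpos]
    have hev : ∀ᶠ z in nhdsWithin t (Ioi t), 0 < g z := hcont (Ioi_mem_nhds hpos)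
    refine Tendsto.congr' ?_ hslope
    filter_upwards [hev] with z hz
    rw [max_eq_left hz.le, max_eq_left hpos.le]

lemma gen_nonpos {ι : Type*} [Fintype ι] {g w : ι → ℝ → ℝ} {K b : ℝ} (hK : 0 ≤ K)
    (hder : ∀ c t, t ∈ Ico 0 b → HasDerivWithinAt (g c) (w c t) (Ici t) t)
    (hcont : ∀ c, ContinuousOn (g c) (Icc 0 b))
    (h0 : ∀ c, g c 0 ≤ 0)
    (hkey : ∀ t, t ∈ Ico 0 b → ∀ c, 0 ≤ g c t → w c t ≤ K * ∑ c', max (g c' t) 0) :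
    ∀ t ∈ Icc 0 b, ∀ c, g c t ≤ 0 := by
  classical
  set h : ℝ → ℝ := fun t => ∑ c', max (g c' t) 0 with hh
  set D : ℝ → ℝ := fun t =>
    ∑ c', (if 0 < g c' t then w c' t else if g c' t < 0 then 0 else max (w c' t) 0) with hD
  have hhnon : ∀ t, 0 ≤ h t := fun t => Finset.sum_nonneg fun c _ => le_max_right _ _
  have hbound : ∀ t ∈ Ico 0 b, D t ≤ (K * (Fintype.card ι : ℝ)) * h t + 0 := by
    intro t ht
    have hterm : ∀ c ∈ (Finset.univ : Finset ι),
        (if 0 < g c t then w c t else if g c t < 0 then 0 else max (w c t) 0) ≤ K * h t := by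
      intro c _
      have hKh : 0 ≤ K * h t := mul_nonneg hK (hhnon t)
      split_ifs with h1 h2
      · exact hkey t ht c h1.le
      · exact hKh
      · have hge : 0 ≤ g c t := le_of_not_gt h2
        exact max_le (hkey t ht c hge) hKh
    have := Finset.sum_le_sum hterm
    rw [Finset.sum_const, Finset.card_univ] at this
    rw [hD]
    push_cast at this ⊢
    rw [nsmul_eq_mul] at this
    linarith
  have hconth : ContinuousOn h (Icc 0 b) := by
    apply continuousOn_finset_sum
    intro c _
    intro t ht
    exact Filter.Tendsto.max ((hcont c) t ht) tendsto_const_nhds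
  have h0' : h 0 ≤ 0 := Finset.sum_nonpos fun c _ => by rw [max_eq_right (h0 c)]
  have hgron := le_gronwallBound_of_liminf_deriv_right_le (f := h) (f' := D)
    (δ := 0) (K := K * (Fintype.card ι : ℝ)) (ε := 0) (a := 0) (b := b) hconth
    (fun x hx r hr => by
      have hs : Tendsto (fun z => (z - x)⁻¹ * (h z - h x)) (nhdsWithin x (Ioi x)) (nhds (D x)) := by
        have heq : ∀ z, (z - x)⁻¹ * (h z - h x)
            = ∑ c', (z - x)⁻¹ * (max (g c' z) 0 - max (g c' x) 0) := by
          intro z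
          rw [hh, ← Finset.sum_sub_distrib, Finset.mul_sum]
        exact Tendsto.congr (fun z => (heq z).symm)
          (tendsto_finset_sum _ fun c _ => slope_max_tendsto (hder c x hx))
      exact Filter.Eventually.frequently (hs.eventually (Iio_mem_nhds hr)))
    h0' hbound
  intro t ht c
  have hht := hgron t ht
  rw [gronwallBound_ε0, zero_mul] at hht
  have hsingle : max (g c t) 0 ≤ h t :=
    Finset.single_le_sum (f := fun c' => max (g c' t) 0)
      (fun c' _ => le_max_right _ _) (Finset.mem_univ c)
  have : max (g c t) 0 ≤ 0 := by linarith
  exact le_trans (le_max_left _ _) this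

/-! ### the clamped vector field and global solutions -/

section Dyn

variable {m : ℕ} {n : Fin m → ℕ}
variable (lam : ∀ i : Fin m, Fin (n i + 2) → ℝ) (c0 : Fin m → ℝ) (c : Fin m → Fin m → ℝ)

/-- clamp a state into the cube -/
noncomputable def clamp (x : St m n) : St m n := fun i j => max 0 (min 1 (x i j))

lemma clamp_mem_cube (x : St m n) : inCube (clamp x) := by
  intro i j
  constructor
  · exact le_max_left _ _
  · exact max_le zero_le_one (min_le_left _ _)

lemma clamp_eq_of_inCube {x : St m n} (hx : inCube x) : clamp x = x := by
  funext i j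
  rcases hx i j with ⟨hl, hr⟩
  unfold clamp
  rw [min_eq_right hr, max_eq_right hl]

lemma clamp_coord_of_nonpos {a : ℝ} (ha : a ≤ 0) : max 0 (min 1 a) = 0 := by
  rw [min_eq_right (by linarith), max_eq_left ha]

lemma clamp_coord_of_one_le {a : ℝ} (ha : 1 ≤ a) : max 0 (min 1 a) = 1 := by
  rw [min_eq_left ha, max_eq_right zero_le_one]

lemma abs_clamp_sub (a b : ℝ) : |max 0 (min 1 a) - max 0 (min 1 b)| ≤ |a - b| := by
  have h1 := abs_max_sub_max_le_max (0:ℝ) (min 1 a) 0 (min 1 b)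
  have h2 := abs_min_sub_min_le_max (1:ℝ) a 1 b
  simp only [sub_self, abs_zero] at h1 h2
  refine h1.trans (max_le (abs_nonneg _) (h2.trans (max_le (abs_nonneg _) le_rfl)))

/-- the clamped vector field: globally Lipschitz and bounded, agrees with `netVF`
on the cube -/
noncomputable def hatVF (x : St m n) : St m n := netVF lam c0 c (clamp x)

lemma hatVF_eq_of_inCube {x : St m n} (hx : inCube x) :
    hatVF lam c0 c x = netVF lam c0 c x := by
  unfold hatVF
  rw [clamp_eq_of_inCube hx]

lemma Dabs_clamp_le (x y : St m n) : Dabs (clamp x) (clamp y) ≤ Dabs x y :=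
  Finset.sum_le_sum fun i _ => Finset.sum_le_sum fun j _ => abs_clamp_sub _ _

/-- number of coordinates, as a real -/
noncomputable def nSt (m : ℕ) (n : Fin m → ℕ) : ℝ := ∑ i : Fin m, ((n i : ℝ) + 1)

lemma nSt_nonneg : 0 ≤ nSt m n :=
  Finset.sum_nonneg fun i _ => by positivity

lemma Dabs_le_dist (x y : St m n) : Dabs x y ≤ nSt m n * dist x y := by
  have hcoord : ∀ (i : Fin m) (j : Fin (n i + 1)), |x i j - y i j| ≤ dist x y := by
    intro i j
    have h1 : dist (x i) (y i) ≤ dist x y := dist_le_pi_dist x y i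
    have h2 : dist (x i j) (y i j) ≤ dist (x i) (y i) := dist_le_pi_dist (x i) (y i) j
    rw [Real.dist_eq] at h2
    linarith
  unfold Dabs nSt
  rw [Finset.sum_mul]
  refine Finset.sum_le_sum fun i _ => ?_
  calc ∑ j, |x i j - y i j| ≤ ∑ _j : Fin (n i + 1), dist x y :=
        Finset.sum_le_sum fun j _ => hcoord i j
    _ = ((n i : ℝ) + 1) * dist x y := by
        rw [Finset.sum_const, Finset.card_univ, Fintype.card_fin, nsmul_eq_mul]
        push_cast; ring

/-- global Lipschitz constant for the clamped field -/
noncomputable def KL : ℝ := Lc lam c0 c * nSt m n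

variable (hlam : ∀ i j, 0 < lam i j) (hc0 : ∀ i, 0 < c0 i) (hc : ∀ i k, 0 ≤ c i k)

include hlam hc0 hc in
lemma KL_nonneg : 0 ≤ KL lam c0 c :=
  mul_nonneg (Lc_nonneg lam c0 c hlam hc0 hc) nSt_nonneg

include hlam hc0 hc in
lemma hatVF_lipschitz :
    LipschitzWith (Real.toNNReal (KL lam c0 c)) (hatVF lam c0 c) := by
  have hKL0 := KL_nonneg lam c0 c hlam hc0 hc
  have hLc0 := Lc_nonneg lam c0 c hlam hc0 hc
  refine LipschitzWith.of_dist_le_mul fun x y => ?_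
  rw [Real.coe_toNNReal _ hKL0]
  have hdnn : 0 ≤ KL lam c0 c * dist x y := mul_nonneg hKL0 dist_nonneg
  rw [dist_pi_le_iff hdnn]
  intro i
  rw [dist_pi_le_iff hdnn]
  intro j
  rw [Real.dist_eq]
  have h1 : |hatVF lam c0 c x i j - hatVF lam c0 c y i j|
      ≤ Lc lam c0 c * Dabs (clamp x) (clamp y) :=
    netVF_lip lam c0 c hlam hc0 hc
      (inCube.box2' (clamp_mem_cube x)) (inCube.box2' (clamp_mem_cube y)) i j
  have h2 : Dabs (clamp x) (clamp y) ≤ nSt m n * dist x y :=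
    (Dabs_clamp_le x y).trans (Dabs_le_dist x y)
  calc |hatVF lam c0 c x i j - hatVF lam c0 c y i j|
      ≤ Lc lam c0 c * (nSt m n * dist x y) :=
        h1.trans (mul_le_mul_of_nonneg_left h2 hLc0)
    _ = KL lam c0 c * dist x y := by unfold KL; ring

include hlam hc0 hc in
lemma hatVF_bound (x : St m n) : ‖hatVF lam c0 c x‖ ≤ Cb lam c0 c := by
  have hCb := (Cb_pos lam c0 c hlam hc0 hc).le
  rw [pi_norm_le_iff_of_nonneg hCb]
  intro i
  rw [pi_norm_le_iff_of_nonneg hCb]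
  intro j
  rw [Real.norm_eq_abs]
  exact netVF_bound lam c0 c hlam hc0 hc (clamp_mem_cube x) i j

/-! ### coordinate calculus helpers -/

lemma hasDerivWithinAt_coord {f : ℝ → St m n} {v : St m n} {s : Set ℝ} {t : ℝ}
    (hf : HasDerivWithinAt f v s t) (i : Fin m) (j : Fin (n i + 1)) :
    HasDerivWithinAt (fun r => f r i j) (v i j) s t :=
  (hasDerivWithinAt_pi.1 ((hasDerivWithinAt_pi.1 hf) i)) j

lemma continuousOn_coord {f : ℝ → St m n} {s : Set ℝ} (hf : ContinuousOn f s)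
    (i : Fin m) (j : Fin (n i + 1)) :
    ContinuousOn (fun r => f r i j) s := by
  have hco : Continuous (fun x : St m n => x i j) :=
    (continuous_apply j).comp (continuous_apply i)
  exact hco.comp_continuousOn hf

/-! ### global forward solutions of the clamped field -/

include hlam hc0 hc in
lemma exists_global_sol (x₀ : St m n) :
    ∃ f : ℝ → St m n, f 0 = x₀ ∧ ContinuousOn f (Ici 0) ∧
      (∀ t, 0 ≤ t → HasDerivWithinAt f (hatVF lam c0 c (f t)) (Ici t) t) ∧
      (∀ t, 0 < t → HasDerivAt f (hatVF lam c0 c (f t)) t) := by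
  classical
  set v : St m n → St m n := hatVF lam c0 c with hv
  have hK := hatVF_lipschitz lam c0 c hlam hc0 hc
  have hCb := Cb_pos lam c0 c hlam hc0 hc
  have hB : ∀ x, ‖v x‖ ≤ Cb lam c0 c := hatVF_bound lam c0 c hlam hc0 hc
  -- existence on [0, T]
  have ex : ∀ T : ℝ, 0 < T → ∃ f : ℝ → St m n, f 0 = x₀ ∧
      ∀ t ∈ Icc (0:ℝ) T, HasDerivWithinAt f (v (f t)) (Icc (0:ℝ) T) t := by
    intro T hT
    have hpl : IsPicardLindelof (fun _ : ℝ => v) (tmin := 0) (tmax := T) ⟨0, le_refl 0, hT.le⟩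
        x₀ (Real.toNNReal (Cb lam c0 c * T + 1)) 0 (Real.toNNReal (Cb lam c0 c))
        (Real.toNNReal (KL lam c0 c)) := by
      apply IsPicardLindelof.of_time_independent
      · intro x _
        rw [Real.coe_toNNReal _ hCb.le]
        exact hB x
      · exact hK.lipschitzOnWith
      · have hpos : 0 ≤ Cb lam c0 c * T + 1 := by positivity
        simp only [Real.coe_toNNReal _ hCb.le, NNReal.coe_zero, sub_zero,
          Real.coe_toNNReal _ hpos, max_eq_left hT.le]
        linarith
    obtain ⟨α, hα0, hαD⟩ := hpl.exists_eq_forall_mem_Icc_hasDerivWithinAt₀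
    exact ⟨α, hα0, hαD⟩
  choose sol hsol0 hsolD using fun T : {T : ℝ // 0 < T} => ex T.1 T.2
  set S : ℝ → ℝ → St m n := fun T =>
    if hT : 0 < T then sol ⟨T, hT⟩ else fun _ => x₀ with hS
  have hS0 : ∀ T (hT : 0 < T), S T 0 = x₀ := by
    intro T hT; rw [hS]; simp only [dif_pos hT]; exact hsol0 ⟨T, hT⟩
  have hSD : ∀ T (hT : 0 < T), ∀ t ∈ Icc (0:ℝ) T,
      HasDerivWithinAt (S T) (v (S T t)) (Icc (0:ℝ) T) t := by
    intro T hT t ht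
    rw [hS]; simp only [dif_pos hT]; exact hsolD ⟨T, hT⟩ t ht
  have hScont : ∀ T (hT : 0 < T), ContinuousOn (S T) (Icc (0:ℝ) T) :=
    fun T hT t ht => ((hSD T hT) t ht).continuousWithinAt
  have hSder' : ∀ T (hT : 0 < T), ∀ t ∈ Ico (0:ℝ) T,
      HasDerivWithinAt (S T) (v (S T t)) (Ici t) t := by
    intro T hT t ht
    refine HasDerivWithinAt.mono_of_mem_nhdsWithin (hSD T hT t ⟨ht.1, ht.2.le⟩) ?_
    refine mem_nhdsWithin_iff_exists_mem_nhds_inter.2 ⟨Iio T, Iio_mem_nhds ht.2, ?_⟩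
    rintro z ⟨hz1, hz2⟩
    exact ⟨le_trans ht.1 hz2, hz1.le⟩
  -- uniqueness/consistency
  have huniq : ∀ T T' (hT : 0 < T) (hT' : 0 < T'), T ≤ T' →
      EqOn (S T) (S T') (Icc 0 T) := by
    intro T T' hT hT' hTT'
    refine ODE_solution_unique_of_mem_Icc_right
      (v := fun _ => v) (s := fun _ => (univ : Set (St m n)))
      (K := Real.toNNReal (KL lam c0 c)) (fun _ _ => hK.lipschitzOnWith)
      (hScont T hT) (fun t ht => hSder' T hT t ht) (fun t _ => mem_univ _)
      ((hScont T' hT').mono (Icc_subset_Icc_right hTT'))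
      (fun t ht => hSder' T' hT' t ⟨ht.1, lt_of_lt_of_le ht.2 hTT'⟩)
      (fun t _ => mem_univ _) ?_
    rw [hS0 T hT, hS0 T' hT']
  set f : ℝ → St m n := fun t => S (t + 1) t with hf
  have hagree : ∀ T (hT : 0 < T) t, 0 ≤ t → t + 1 ≤ T → f t = S T t := by
    intro T hT t ht htT
    rw [hf]
    exact huniq (t + 1) T (by linarith) hT htT ⟨ht, by linarith⟩
  have hf0 : f 0 = x₀ := by
    rw [hf]
    show S (0 + 1) 0 = x₀
    rw [show (0:ℝ) + 1 = 1 by norm_num]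
    exact hS0 1 one_pos
  refine ⟨f, hf0, ?_, ?_, ?_⟩
  · -- continuity on Ici 0
    intro t ht
    have hT : (0:ℝ) < t + 2 := by have : (0:ℝ) ≤ t := ht; linarith
    have hmem : Ici (0:ℝ) ∩ Iio (t + 1) ∈ nhdsWithin t (Ici 0) := by
      refine inter_mem self_mem_nhdsWithin ?_
      exact mem_nhdsWithin_of_mem_nhds (Iio_mem_nhds (by linarith [mem_Ici.1 ht]))
    have hsub : Ici (0:ℝ) ∩ Iio (t + 1) ⊆ Icc 0 (t + 2) := by
      rintro z ⟨hz1, hz2⟩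
      exact ⟨hz1, by linarith [mem_Iio.1 hz2]⟩
    have hcw : ContinuousWithinAt (S (t + 2)) (Ici (0:ℝ) ∩ Iio (t + 1)) t := by
      refine ((hScont (t + 2) hT) t ⟨mem_Ici.1 ht, by linarith [mem_Ici.1 ht]⟩).mono hsub
    have heq : EqOn f (S (t + 2)) (Ici (0:ℝ) ∩ Iio (t + 1)) := by
      rintro z ⟨hz1, hz2⟩
      exact hagree (t + 2) hT z hz1 (by linarith [mem_Iio.1 hz2])
    have hft : f t = S (t + 2) t :=
      hagree (t + 2) hT t (mem_Ici.1 ht) (by linarith)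
    have := (hcw.congr heq hft)
    exact (continuousWithinAt_inter
      (mem_nhds_iff.2 ⟨Iio (t+1), subset_refl _, isOpen_Iio, by
        simp only [mem_Iio]; linarith [mem_Ici.1 ht]⟩)).1
      (this.mono (by intro z hz; exact hz))
  · -- right derivatives
    intro t ht
    have hT : (0:ℝ) < t + 2 := by linarith
    have hder := hSder' (t + 2) hT t ⟨ht, by linarith⟩
    have hft : f t = S (t + 2) t := hagree (t + 2) hT t ht (by linarith)
    have heq : f =ᶠ[nhdsWithin t (Ici t)] S (t + 2) := by
      have hmem : Iio (t + 1) ∈ nhdsWithin t (Ici t) :=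
        mem_nhdsWithin_of_mem_nhds (Iio_mem_nhds (by linarith))
      filter_upwards [hmem, self_mem_nhdsWithin] with z hz1 hz2
      exact hagree (t + 2) hT z (le_trans ht hz2) (by linarith [mem_Iio.1 hz1])
    have := hder.congr_of_eventuallyEq heq hft
    rwa [← hft] at this
  · -- two-sided derivatives in the interior
    intro t ht
    have hT : (0:ℝ) < t + 2 := by linarith
    have hder := (hSD (t + 2) hT t ⟨ht.le, by linarith⟩).hasDerivAt
      (Icc_mem_nhds ht (by linarith))
    have hft : f t = S (t + 2) t := hagree (t + 2) hT t ht.le (by linarith)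
    have heq : f =ᶠ[nhds t] S (t + 2) := by
      have hmem : Ioo 0 (t + 1) ∈ nhds t := Ioo_mem_nhds ht (by linarith)
      filter_upwards [hmem] with z hz
      exact hagree (t + 2) hT z hz.1.le (by linarith [hz.2])
    have := hder.congr_of_eventuallyEq heq
    rwa [← hft] at this

/-! ### invariance of the cube -/

include hlam hc0 hc in
lemma invariance_hat {f : ℝ → St m n} (hf0 : inCube (f 0))
    (hder : ∀ t, 0 ≤ t → HasDerivWithinAt f (hatVF lam c0 c (f t)) (Ici t) t)
    (hcont : ContinuousOn f (Ici 0)) :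
    ∀ t, 0 ≤ t → inCube (f t) := by
  intro T hT
  have hlow := gen_nonpos (ι := Σ i : Fin m, Fin (n i + 1))
    (g := fun p t => -(f t p.1 p.2))
    (w := fun p t => -(hatVF lam c0 c (f t) p.1 p.2))
    (K := 0) (b := T) le_rfl
    (fun p t ht => (hasDerivWithinAt_coord (hder t ht.1) p.1 p.2).neg)
    (fun p => (continuousOn_coord (hcont.mono Icc_subset_Ici_self) p.1 p.2).neg)
    (fun p => by exact neg_nonpos.2 (hf0 p.1 p.2).1)
    (fun t ht p hp => by
      rw [zero_mul]
      have hzero : clamp (f t) p.1 p.2 = 0 :=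
        clamp_coord_of_nonpos (by linarith [neg_nonneg.1 hp])
      have := netVF_sign0 lam c0 c hlam hc0 hc (clamp_mem_cube (f t)) hzero
      unfold hatVF
      linarith)
  have hhigh := gen_nonpos (ι := Σ i : Fin m, Fin (n i + 1))
    (g := fun p t => f t p.1 p.2 - 1)
    (w := fun p t => hatVF lam c0 c (f t) p.1 p.2)
    (K := 0) (b := T) le_rfl
    (fun p t ht => (hasDerivWithinAt_coord (hder t ht.1) p.1 p.2).sub_const 1)
    (fun p => (continuousOn_coord (hcont.mono Icc_subset_Ici_self) p.1 p.2).sub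
      continuousOn_const)
    (fun p => by linarith [(hf0 p.1 p.2).2])
    (fun t ht p hp => by
      rw [zero_mul]
      have hone : clamp (f t) p.1 p.2 = 1 :=
        clamp_coord_of_one_le (by linarith [sub_nonneg.1 hp])
      have := netVF_sign1 lam c0 c hlam hc0 hc (clamp_mem_cube (f t)) hone
      unfold hatVF
      linarith)
  intro i j
  constructor
  · have := hlow T ⟨hT, le_rfl⟩ ⟨i, j⟩
    dsimp only at this
    linarith
  · have := hhigh T ⟨hT, le_rfl⟩ ⟨i, j⟩
    dsimp only at this
    linarith

/-! ### the comparison principle -/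

lemma sigma_sum_eq (h : ∀ i : Fin m, Fin (n i + 1) → ℝ) :
    ∑ p : Σ i : Fin m, Fin (n i + 1), h p.1 p.2 = ∑ i, ∑ j, h i j := by
  rw [← Finset.univ_sigma_univ, Finset.sum_sigma]

include hlam hc0 hc in
lemma comparison {x y : ℝ → St m n}
    (hx : ∀ t, 0 ≤ t → inCube (x t)) (hy : ∀ t, 0 ≤ t → inCube (y t))
    (hxd : ∀ t, 0 ≤ t → HasDerivWithinAt x (netVF lam c0 c (x t)) (Ici t) t)
    (hyd : ∀ t, 0 ≤ t → HasDerivWithinAt y (netVF lam c0 c (y t)) (Ici t) t)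
    (hxc : ContinuousOn x (Ici 0)) (hyc : ContinuousOn y (Ici 0))
    (h0 : ∀ i j, x 0 i j ≤ y 0 i j) :
    ∀ t, 0 ≤ t → ∀ i j, x t i j ≤ y t i j := by
  intro T hT i j
  have hLc0 := Lc_nonneg lam c0 c hlam hc0 hc
  have hgen := gen_nonpos (ι := Σ i : Fin m, Fin (n i + 1))
    (g := fun p t => x t p.1 p.2 - y t p.1 p.2)
    (w := fun p t => netVF lam c0 c (x t) p.1 p.2 - netVF lam c0 c (y t) p.1 p.2)
    (K := Lc lam c0 c) (b := T) hLc0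
    (fun p t ht => ((hasDerivWithinAt_coord (hxd t ht.1) p.1 p.2).sub
      (hasDerivWithinAt_coord (hyd t ht.1) p.1 p.2)))
    (fun p => (continuousOn_coord (hxc.mono Icc_subset_Ici_self) p.1 p.2).sub
      (continuousOn_coord (hyc.mono Icc_subset_Ici_self) p.1 p.2))
    (fun p => by linarith [h0 p.1 p.2])
    (fun t ht p hp => by
      -- key cooperativity estimate
      set W : St m n := fun i' j' => max (x t i' j') (y t i' j') with hW
      have hWc : inCube W := fun i' j' =>
        ⟨le_max_of_le_left (hx t ht.1 i' j').1,
         max_le (hx t ht.1 i' j').2 (hy t ht.1 i' j').2⟩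
      have hxW : ∀ i' j', x t i' j' ≤ W i' j' := fun i' j' => le_max_left _ _
      have hWp : x t p.1 p.2 = W p.1 p.2 := by
        rw [hW]
        exact (max_eq_left (by linarith [sub_nonneg.1 hp])).symm
      have hmono := netVF_mono lam c0 c hlam hc0 hc (hx t ht.1) hWc hxW hWp
      have hlip := netVF_lip lam c0 c hlam hc0 hc
        (inCube.box2' hWc) (inCube.box2' (hy t ht.1)) p.1 p.2
      have hDW : Dabs W (y t) = ∑ p' : Σ i' : Fin m, Fin (n i' + 1),
          max (x t p'.1 p'.2 - y t p'.1 p'.2) 0 := by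
        rw [sigma_sum_eq (fun i' j' => max (x t i' j' - y t i' j') 0)]
        unfold Dabs
        refine Finset.sum_congr rfl fun i' _ => Finset.sum_congr rfl fun j' _ => ?_
        rw [hW]
        rw [show max (x t i' j') (y t i' j') - y t i' j'
            = max (x t i' j' - y t i' j') 0 by
          rcases le_total (x t i' j') (y t i' j') with hxy | hxy
          · rw [max_eq_right hxy, sub_self, max_eq_right (by linarith)]
          · rw [max_eq_left hxy, max_eq_left (by linarith)]]
        exact abs_of_nonneg (le_max_right _ _)
      have habs := abs_le.1 hlip
      rw [hDW] at habs
      linarith [habs.2, hmono])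
  have := hgen T ⟨hT, le_rfl⟩ ⟨i, j⟩
  dsimp only at this
  linarith

/-- distance of a real number to its clamped value -/
lemma clamp_dist (a : ℝ) : |a - max 0 (min 1 a)| = max (-a) 0 + max (a - 1) 0 := by
  rcases le_total a 0 with h0 | h0
  · rw [clamp_coord_of_nonpos h0, sub_zero, max_eq_right (by linarith : a - 1 ≤ 0),
      max_eq_left (by linarith : (0:ℝ) ≤ -a), abs_of_nonpos h0]
    ring
  · rcases le_total a 1 with h1 | h1
    · rw [min_eq_right h1, max_eq_right h0, sub_self, abs_zero,
        max_eq_right (by linarith : -a ≤ 0), max_eq_right (by linarith : a - 1 ≤ 0)]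
      ring
    · rw [clamp_coord_of_one_le h1, max_eq_right (by linarith : -a ≤ 0),
        max_eq_left (by linarith : (0:ℝ) ≤ a - 1), abs_of_nonneg (by linarith : (0:ℝ) ≤ a - 1)]
      ring

include hlam hc0 hc in
lemma invariance_net {z : ℝ → St m n} (hz0 : inCube (z 0))
    (hzD : ∀ t, 0 ≤ t → HasDerivAt z (netVF lam c0 c (z t)) t) :
    ∀ t, 0 ≤ t → inCube (z t) := by
  classical
  have hLc0 := Lc_nonneg lam c0 c hlam hc0 hc
  by_contra hcon
  push_neg at hcon
  obtain ⟨T1, hT1pos, hT1⟩ := hcon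
  set Bd := {t : ℝ | 0 ≤ t ∧ ¬ inCube (z t)} with hBddef
  have hBdne : Bd.Nonempty := ⟨T1, hT1pos, hT1⟩
  have hBdbd : BddBelow Bd := ⟨0, fun t ht => ht.1⟩
  set T0 := sInf Bd with hT0def
  have hT00 : 0 ≤ T0 := le_csInf hBdne fun t ht => ht.1
  have hbefore : ∀ s, 0 ≤ s → s < T0 → inCube (z s) := by
    intro s hs hsT
    by_contra hbad
    exact absurd (csInf_le hBdbd ⟨hs, hbad⟩) (not_le.2 hsT)
  have hT0cube : inCube (z T0) := by
    rcases eq_or_lt_of_le hT00 with h | h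
    · rw [← h]; exact hz0
    · intro i j
      have htd : Tendsto (fun s => z s i j) (nhdsWithin T0 (Iio T0)) (𝓝 (z T0 i j)) := by
        have hzc : ContinuousAt (fun s => z s i j) T0 := by
          have : Continuous (fun v : St m n => v i j) :=
            (continuous_apply j).comp (continuous_apply i)
          exact this.continuousAt.comp (hzD T0 hT00).continuousAt
        exact hzc.continuousWithinAt.tendsto
      have hev0 : ∀ᶠ s in nhdsWithin T0 (Iio T0), 0 ≤ z s i j := by
        filter_upwards [Ioo_mem_nhdsLT h] with s hs
        exact (hbefore s hs.1.le hs.2 i j).1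
      have hev1 : ∀ᶠ s in nhdsWithin T0 (Iio T0), z s i j ≤ 1 := by
        filter_upwards [Ioo_mem_nhdsLT h] with s hs
        exact (hbefore s hs.1.le hs.2 i j).2
      exact ⟨ge_of_tendsto htd hev0, le_of_tendsto htd hev1⟩
  -- find a small interval beyond T0 on which z stays in box2
  have hzct : ContinuousAt z T0 := (hzD T0 hT00).continuousAt
  obtain ⟨δ, hδpos, hδ⟩ := Metric.continuousAt_iff.1 hzct 1 one_pos
  set δ' := δ / 2 with hδ'def
  have hδ'pos : 0 < δ' := by positivity
  have hbox : ∀ t, 0 ≤ t → t ≤ δ' → box2 (z (T0 + t)) := by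
    intro t ht1 ht2 i j
    have hd : dist (T0 + t) T0 < δ := by
      rw [Real.dist_eq]
      rw [abs_of_nonneg (by linarith : (0:ℝ) ≤ T0 + t - T0)]
      linarith
    have := hδ hd
    have hij : dist (z (T0 + t) i j) (z T0 i j) ≤ 1 := by
      have h1 : dist (z (T0 + t) i) (z T0 i) ≤ dist (z (T0 + t)) (z T0) :=
        dist_le_pi_dist _ _ i
      have h2 : dist (z (T0 + t) i j) (z T0 i j) ≤ dist (z (T0 + t) i) (z T0 i) :=
        dist_le_pi_dist _ _ j
      linarith
    rw [Real.dist_eq, abs_le] at hij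
    rcases hT0cube i j with ⟨hc1, hc2⟩
    exact ⟨by linarith [hij.1], by linarith [hij.2]⟩
  -- the shifted function
  set zs : ℝ → St m n := fun t => z (T0 + t) with hzs
  have hzsD : ∀ t, 0 ≤ t → HasDerivWithinAt zs (netVF lam c0 c (zs t)) (Ici t) t := by
    intro t ht
    have h1 : HasDerivAt z (netVF lam c0 c (z (T0 + t))) (T0 + t) :=
      hzD (T0 + t) (by linarith)
    have h2 : HasDerivWithinAt (fun r : ℝ => T0 + r) 1 (Ici t) t :=
      (hasDerivWithinAt_id t _).const_add T0
    have h3 := HasDerivWithinAt.scomp t (h1.hasDerivWithinAt (s := Ici (T0 + t))) h2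
      (fun r hr => by simp only [mem_Ici] at hr ⊢; linarith)
    simpa [one_smul, Function.comp_def] using h3
  have hzsC : ContinuousOn zs (Ici 0) := by
    intro t ht
    have : ContinuousAt zs t := by
      have := (hzD (T0 + t) (by linarith [mem_Ici.1 ht])).continuousAt
      exact this.comp ((continuous_const.add continuous_id).continuousAt)
    exact this.continuousWithinAt
  -- deviation functions on [0, δ']
  have hgen := gen_nonpos
    (ι := (Σ i : Fin m, Fin (n i + 1)) ⊕ (Σ i : Fin m, Fin (n i + 1)))
    (g := fun p t => Sum.elim (fun q : Σ i : Fin m, Fin (n i + 1) => -(zs t q.1 q.2))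
      (fun q : Σ i : Fin m, Fin (n i + 1) => zs t q.1 q.2 - 1) p)
    (w := fun p t => Sum.elim
      (fun q : Σ i : Fin m, Fin (n i + 1) => -(netVF lam c0 c (zs t) q.1 q.2))
      (fun q : Σ i : Fin m, Fin (n i + 1) => netVF lam c0 c (zs t) q.1 q.2) p)
    (K := Lc lam c0 c) (b := δ') hLc0
    (fun p t ht => by
      rcases p with q | q
      · exact (hasDerivWithinAt_coord (hzsD t ht.1) q.1 q.2).neg
      · exact (hasDerivWithinAt_coord (hzsD t ht.1) q.1 q.2).sub_const 1)
    (fun p => by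
      rcases p with q | q
      · exact (continuousOn_coord (hzsC.mono Icc_subset_Ici_self) q.1 q.2).neg
      · exact (continuousOn_coord (hzsC.mono Icc_subset_Ici_self) q.1 q.2).sub
          continuousOn_const)
    (fun p => by
      rcases p with q | q
      · have hz0' : zs 0 = z T0 := by rw [hzs]; norm_num
        simp only [Sum.elim_inl, hz0']
        linarith [(hT0cube q.1 q.2).1]
      · have hz0' : zs 0 = z T0 := by rw [hzs]; norm_num
        simp only [Sum.elim_inr, hz0']
        linarith [(hT0cube q.1 q.2).2])
    (fun t ht p hp => by
      have hbx : box2 (zs t) := hbox t ht.1 (le_of_lt ht.2)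
      have hclc : inCube (clamp (zs t)) := clamp_mem_cube (zs t)
      have hlip := netVF_lip lam c0 c hlam hc0 hc hbx (inCube.box2' hclc)
      -- the sum of positive parts equals the clamp distance
      have hsum : ∑ p', max (Sum.elim
            (fun q : Σ i : Fin m, Fin (n i + 1) => -(zs t q.1 q.2))
            (fun q : Σ i : Fin m, Fin (n i + 1) => zs t q.1 q.2 - 1) p') 0
          = Dabs (zs t) (clamp (zs t)) := by
        rw [Fintype.sum_sum_type]
        simp only [Sum.elim_inl, Sum.elim_inr]
        unfold Dabs
        rw [sigma_sum_eq (fun i' j' => max (-(zs t i' j')) 0),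
          sigma_sum_eq (fun i' j' => max (zs t i' j' - 1) 0),
          ← Finset.sum_add_distrib]
        refine Finset.sum_congr rfl fun i' _ => ?_
        rw [← Finset.sum_add_distrib]
        refine Finset.sum_congr rfl fun j' _ => ?_
        simp only [clamp]
        rw [clamp_dist (zs t i' j')]
      rcases p with q | q
      · simp only [Sum.elim_inl] at hp ⊢
        have hzero : clamp (zs t) q.1 q.2 = 0 :=
          clamp_coord_of_nonpos (by linarith [neg_nonneg.1 hp])
        have hs0 := netVF_sign0 lam c0 c hlam hc0 hc hclc hzero
        have habs := (abs_le.1 (hlip q.1 q.2)).1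
        rw [hsum]
        linarith
      · simp only [Sum.elim_inr] at hp ⊢
        have hone : clamp (zs t) q.1 q.2 = 1 :=
          clamp_coord_of_one_le (by linarith [sub_nonneg.1 hp])
        have hs1 := netVF_sign1 lam c0 c hlam hc0 hc hclc hone
        have habs := (abs_le.1 (hlip q.1 q.2)).2
        rw [hsum]
        linarith)
  -- conclude: cube membership up to T0 + δ'
  have hcube' : ∀ t, 0 ≤ t → t ≤ δ' → inCube (z (T0 + t)) := by
    intro t ht1 ht2 i j
    have h1 := hgen t ⟨ht1, ht2⟩ (Sum.inl ⟨i, j⟩)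
    have h2 := hgen t ⟨ht1, ht2⟩ (Sum.inr ⟨i, j⟩)
    simp only [Sum.elim_inl] at h1
    simp only [Sum.elim_inr] at h2
    constructor
    · linarith
    · linarith
  obtain ⟨s, hsBd, hslt⟩ := (csInf_lt_iff hBdbd hBdne).1
    (show sInf Bd < T0 + δ' by rw [← hT0def]; linarith)
  have hsge : T0 ≤ s := csInf_le hBdbd hsBd
  have : inCube (z s) := by
    have := hcube' (s - T0) (by linarith) (by linarith)
    rwa [show T0 + (s - T0) = s by ring] at this
  exact hsBd.2 this

/-! ### limits of solutions are equilibria -/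

include hlam hc0 hc in
lemma limit_is_equilibrium {f : ℝ → St m n} {L : St m n}
    (hC : ContinuousOn f (Ici 0))
    (hD2 : ∀ t, 0 < t → HasDerivAt f (hatVF lam c0 c (f t)) t)
    (hlim : Tendsto f atTop (nhds L)) :
    hatVF lam c0 c L = 0 := by
  have hFh : Continuous (hatVF lam c0 c) :=
    (hatVF_lipschitz lam c0 c hlam hc0 hc).continuous
  have hIble : ∀ t : ℝ, 1 ≤ t →
      IntervalIntegrable (fun s => hatVF lam c0 c (f s)) MeasureTheory.volume t (t+1) := by
    intro t ht
    refine (hFh.comp_continuousOn (hC.mono ?_)).intervalIntegrable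
    rw [uIcc_of_le (by linarith)]
    intro s hs
    exact le_trans (by linarith) hs.1
  have hInt : ∀ t : ℝ, 1 ≤ t →
      (∫ s in t..(t+1), hatVF lam c0 c (f s)) = f (t+1) - f t := by
    intro t ht
    refine intervalIntegral.integral_eq_sub_of_hasDerivAt (fun s hs => ?_) (hIble t ht)
    rw [uIcc_of_le (by linarith)] at hs
    exact hD2 s (by linarith [hs.1])
  have h2 : Tendsto (fun t : ℝ => f (t+1) - f t) atTop (nhds 0) := by
    have hshift : Tendsto (fun t : ℝ => f (t+1)) atTop (nhds L) :=
      hlim.comp (tendsto_atTop_add_const_right atTop 1 tendsto_id)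
    have := hshift.sub hlim
    rwa [sub_self] at this
  have h3 : Tendsto (fun t : ℝ => ∫ s in t..(t+1), hatVF lam c0 c (f s)) atTop
      (nhds (hatVF lam c0 c L)) := by
    rw [Metric.tendsto_atTop]
    intro ε hε
    have hF : Tendsto (fun s => hatVF lam c0 c (f s)) atTop (nhds (hatVF lam c0 c L)) :=
      (hFh.tendsto L).comp hlim
    obtain ⟨N, hN⟩ := (Metric.tendsto_atTop.1 hF) (ε/2) (by positivity)
    refine ⟨max N 1, fun t ht => ?_⟩
    have ht1 : 1 ≤ t := le_trans (le_max_right _ _) ht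
    have htN : N ≤ t := le_trans (le_max_left _ _) ht
    have hIsub : (∫ s in t..(t+1), hatVF lam c0 c (f s)) - hatVF lam c0 c L
        = ∫ s in t..(t+1), (hatVF lam c0 c (f s) - hatVF lam c0 c L) := by
      rw [intervalIntegral.integral_sub (hIble t ht1) intervalIntegrable_const,
        intervalIntegral.integral_const]
      congr 1
      rw [show t + 1 - t = (1:ℝ) by ring, one_smul]
    rw [dist_eq_norm, hIsub]
    have hbd : ‖∫ s in t..(t+1), (hatVF lam c0 c (f s) - hatVF lam c0 c L)‖
        ≤ (ε/2) * |t + 1 - t| := by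
      refine intervalIntegral.norm_integral_le_of_norm_le_const fun s hs => ?_
      rw [uIoc_of_le (by linarith : t ≤ t + 1)] at hs
      have := hN s (by linarith [hs.1])
      rw [dist_eq_norm] at this
      exact this.le
    rw [show t + 1 - t = (1:ℝ) by ring, abs_one, mul_one] at hbd
    linarith
  have h4 := h3.congr' ((eventually_ge_atTop (1:ℝ)).mono fun t ht => hInt t ht)
  exact tendsto_nhds_unique h4 h2

end Dyn
end RFMNet

/-- A network of `m` RFMIOs with feedback inputs
`u^i = c^i_0 + ∑_k c^i_k y^k` (with `c^i_0 > 0`, `c^i_k ≥ 0`) admits a point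
`e ∈ (0,1)^ℓ` with `F(e) = 0` that is globally asymptotically stable on the cube:
every solution of `ż = F(z)` starting in `[0,1]^ℓ` converges to `e`. -/
theorem network_globally_asymptotically_stable
    (m : ℕ) (n : Fin m → ℕ)
    (lam : ∀ i : Fin m, Fin (n i + 2) → ℝ)
    (hlam : ∀ (i : Fin m) (j : Fin (n i + 2)), 0 < lam i j)
    (c0 : Fin m → ℝ) (hc0 : ∀ i, 0 < c0 i)
    (c : Fin m → Fin m → ℝ) (hc : ∀ i k, 0 ≤ c i k) :
    ∃ e : ∀ i : Fin m, Fin (n i + 1) → ℝ,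
      (∀ i j, e i j ∈ Set.Ioo (0 : ℝ) 1) ∧
      netVF lam c0 c e = 0 ∧
      ∀ z : ℝ → ∀ i : Fin m, Fin (n i + 1) → ℝ,
        (∀ t : ℝ, 0 ≤ t → HasDerivAt z (netVF lam c0 c (z t)) t) →
        (∀ i j, z 0 i j ∈ Set.Icc (0 : ℝ) 1) →
        Filter.Tendsto z Filter.atTop (nhds e) := by
  classical
  open RFMNet Set Filter in
  obtain ⟨a, ha0, haC, haD, haD2⟩ :=
    RFMNet.exists_global_sol lam c0 c hlam hc0 hc (fun _ _ => (0:ℝ))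
  obtain ⟨b, hb0, hbC, hbD, hbD2⟩ :=
    RFMNet.exists_global_sol lam c0 c hlam hc0 hc (fun _ _ => (1:ℝ))
  have ha0cube : RFMNet.inCube (a 0) := by
    rw [ha0]; intro i j; exact ⟨le_rfl, zero_le_one⟩
  have hb0cube : RFMNet.inCube (b 0) := by
    rw [hb0]; intro i j; exact ⟨zero_le_one, le_rfl⟩
  have hacube := RFMNet.invariance_hat lam c0 c hlam hc0 hc ha0cube haD haC
  have hbcube := RFMNet.invariance_hat lam c0 c hlam hc0 hc hb0cube hbD hbC
  have haDn : ∀ t, 0 ≤ t → HasDerivWithinAt a (netVF lam c0 c (a t)) (Set.Ici t) t := by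
    intro t ht
    have := haD t ht
    rwa [RFMNet.hatVF_eq_of_inCube lam c0 c (hacube t ht)] at this
  have hbDn : ∀ t, 0 ≤ t → HasDerivWithinAt b (netVF lam c0 c (b t)) (Set.Ici t) t := by
    intro t ht
    have := hbD t ht
    rwa [RFMNet.hatVF_eq_of_inCube lam c0 c (hbcube t ht)] at this
  -- time shifts of solutions
  have hshift : ∀ (f : ℝ → RFMNet.St m n),
      (∀ t, 0 ≤ t → HasDerivWithinAt f (netVF lam c0 c (f t)) (Set.Ici t) t) →
      ContinuousOn f (Set.Ici 0) →
      (∀ t, 0 ≤ t → RFMNet.inCube (f t)) →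
      ∀ σ, 0 ≤ σ →
      ((∀ t, 0 ≤ t → HasDerivWithinAt (fun r => f (r + σ))
          (netVF lam c0 c (f (t + σ))) (Set.Ici t) t) ∧
       ContinuousOn (fun r => f (r + σ)) (Set.Ici 0) ∧
       (∀ t, 0 ≤ t → RFMNet.inCube (f (t + σ)))) := by
    intro f hfD hfC hfcube σ hσ
    refine ⟨?_, ?_, fun t ht => hfcube (t + σ) (by linarith)⟩
    · intro t ht
      have h1 := hfD (t + σ) (by linarith)
      have h2 : HasDerivWithinAt (fun r : ℝ => r + σ) 1 (Set.Ici t) t :=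
        (hasDerivWithinAt_id t _).add_const σ
      have h3 := HasDerivWithinAt.scomp t h1 h2
        (fun r hr => by simp only [Set.mem_Ici] at hr ⊢; linarith)
      simpa [one_smul, Function.comp_def] using h3
    · intro t ht
      have h1 : ContinuousWithinAt f (Set.Ici 0) (t + σ) :=
        hfC (t + σ) (by simp only [Set.mem_Ici] at ht ⊢; linarith)
      have h2 : ContinuousWithinAt (fun r : ℝ => r + σ) (Set.Ici 0) t :=
        (continuous_id.add continuous_const).continuousWithinAt
      exact ContinuousWithinAt.comp (g := f) (f := fun r : ℝ => r + σ)
        (x := t) (s := Set.Ici 0) (t := Set.Ici 0) h1 h2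
        (fun r hr => by simp only [Set.mem_Ici] at hr ⊢; linarith)
  have hamonot : ∀ s t : ℝ, 0 ≤ s → s ≤ t → ∀ i j, a s i j ≤ a t i j := by
    intro s t hs hst i j
    obtain ⟨hD', hC', hcube'⟩ := hshift a haDn haC hacube (t - s) (by linarith)
    have hcmp := RFMNet.comparison lam c0 c hlam hc0 hc hacube hcube' haDn hD' haC hC'
      (fun i' j' => by
        rw [ha0]
        exact (hcube' 0 le_rfl i' j').1)
      s hs i j
    rwa [show s + (t - s) = t by ring] at hcmp
  have hbmonot : ∀ s t : ℝ, 0 ≤ s → s ≤ t → ∀ i j, b t i j ≤ b s i j := by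
    intro s t hs hst i j
    obtain ⟨hD', hC', hcube'⟩ := hshift b hbDn hbC hbcube (t - s) (by linarith)
    have hcmp := RFMNet.comparison lam c0 c hlam hc0 hc hcube' hbcube hD' hbDn hC' hbC
      (fun i' j' => by
        rw [hb0]
        exact (hcube' 0 le_rfl i' j').2)
      s hs i j
    rwa [show s + (t - s) = t by ring] at hcmp
  have hablet : ∀ t, 0 ≤ t → ∀ i j, a t i j ≤ b t i j :=
    RFMNet.comparison lam c0 c hlam hc0 hc hacube hbcube haDn hbDn haC hbC
      (fun i j => by rw [ha0, hb0]; exact zero_le_one)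
  -- the two monotone limits
  set ea : ∀ i : Fin m, Fin (n i + 1) → ℝ := fun i j => ⨆ t : ℝ, a (max t 0) i j with hea
  set eb : ∀ i : Fin m, Fin (n i + 1) → ℝ := fun i j => ⨅ t : ℝ, b (max t 0) i j with heb
  have haco : ∀ i j, Filter.Tendsto (fun t => a t i j) Filter.atTop (nhds (ea i j)) := by
    intro i j
    have hmono : Monotone (fun t => a (max t 0) i j) := fun s t hst =>
      hamonot (max s 0) (max t 0) (le_max_right _ _) (max_le_max hst le_rfl) i j
    have hbdd : BddAbove (Set.range fun t => a (max t 0) i j) := by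
      refine ⟨1, ?_⟩
      rintro v ⟨t, rfl⟩
      exact (hacube (max t 0) (le_max_right _ _) i j).2
    have h1 := tendsto_atTop_ciSup hmono hbdd
    refine Filter.Tendsto.congr' ?_ h1
    filter_upwards [Filter.eventually_ge_atTop (0:ℝ)] with t ht
    rw [max_eq_left ht]
  have hbco : ∀ i j, Filter.Tendsto (fun t => b t i j) Filter.atTop (nhds (eb i j)) := by
    intro i j
    have hmono : Antitone (fun t => b (max t 0) i j) := fun s t hst =>
      hbmonot (max s 0) (max t 0) (le_max_right _ _) (max_le_max hst le_rfl) i j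
    have hbdd : BddBelow (Set.range fun t => b (max t 0) i j) := by
      refine ⟨0, ?_⟩
      rintro v ⟨t, rfl⟩
      exact (hbcube (max t 0) (le_max_right _ _) i j).1
    have h1 := tendsto_atTop_ciInf hmono hbdd
    refine Filter.Tendsto.congr' ?_ h1
    filter_upwards [Filter.eventually_ge_atTop (0:ℝ)] with t ht
    rw [max_eq_left ht]
  have halim : Filter.Tendsto a Filter.atTop (nhds ea) :=
    tendsto_pi_nhds.2 fun i => tendsto_pi_nhds.2 fun j => haco i j
  have hblim : Filter.Tendsto b Filter.atTop (nhds eb) :=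
    tendsto_pi_nhds.2 fun i => tendsto_pi_nhds.2 fun j => hbco i j
  have heacube : RFMNet.inCube ea := by
    intro i j
    constructor
    · exact ge_of_tendsto (haco i j)
        ((Filter.eventually_ge_atTop (0:ℝ)).mono fun t ht => (hacube t ht i j).1)
    · exact le_of_tendsto (haco i j)
        ((Filter.eventually_ge_atTop (0:ℝ)).mono fun t ht => (hacube t ht i j).2)
  have hebcube : RFMNet.inCube eb := by
    intro i j
    constructor
    · exact ge_of_tendsto (hbco i j)
        ((Filter.eventually_ge_atTop (0:ℝ)).mono fun t ht => (hbcube t ht i j).1)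
    · exact le_of_tendsto (hbco i j)
        ((Filter.eventually_ge_atTop (0:ℝ)).mono fun t ht => (hbcube t ht i j).2)
  have haeqn : netVF lam c0 c ea = 0 := by
    have h := RFMNet.limit_is_equilibrium lam c0 c hlam hc0 hc haC haD2 halim
    rwa [RFMNet.hatVF_eq_of_inCube lam c0 c heacube] at h
  have hbeqn : netVF lam c0 c eb = 0 := by
    have h := RFMNet.limit_is_equilibrium lam c0 c hlam hc0 hc hbC hbD2 hblim
    rwa [RFMNet.hatVF_eq_of_inCube lam c0 c hebcube] at h
  have heale : ∀ i j, ea i j ≤ eb i j := fun i j =>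
    le_of_tendsto_of_tendsto (haco i j) (hbco i j)
      ((Filter.eventually_ge_atTop (0:ℝ)).mono fun t ht => hablet t ht i j)
  have heaeb : ea = eb :=
    RFMNet.equilibrium_unique lam c0 c hlam hc0 hc heacube hebcube haeqn hbeqn heale
  refine ⟨ea, ?_, haeqn, ?_⟩
  · exact fun i j => RFMNet.equilibrium_interior lam c0 c hlam hc0 hc heacube haeqn i j
  · intro z hzD hz0
    have hz0c : RFMNet.inCube (z 0) := fun i j => hz0 i j
    have hzcube := RFMNet.invariance_net lam c0 c hlam hc0 hc hz0c hzD
    have hzDw : ∀ t, 0 ≤ t → HasDerivWithinAt z (netVF lam c0 c (z t)) (Set.Ici t) t :=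
      fun t ht => (hzD t ht).hasDerivWithinAt
    have hzC : ContinuousOn z (Set.Ici 0) :=
      fun t ht => ((hzD t ht).continuousAt).continuousWithinAt
    have hlow := RFMNet.comparison lam c0 c hlam hc0 hc hacube hzcube haDn hzDw haC hzC
      (fun i j => by rw [ha0]; exact (hz0 i j).1)
    have hhigh := RFMNet.comparison lam c0 c hlam hc0 hc hzcube hbcube hzDw hbDn hzC hbC
      (fun i j => by rw [hb0]; exact (hz0 i j).2)
    rw [tendsto_pi_nhds]
    intro i
    rw [tendsto_pi_nhds]
    intro j
    have hbco' : Filter.Tendsto (fun t => b t i j) Filter.atTop (nhds (ea i j)) := by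
      rw [heaeb]; exact hbco i j
    exact tendsto_of_tendsto_of_tendsto_of_le_of_le' (haco i j) hbco'
      ((Filter.eventually_ge_atTop (0:ℝ)).mono fun t ht => hlow t ht i j)
      ((Filter.eventually_ge_atTop (0:ℝ)).mono fun t ht => hhigh t ht i j)
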